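/- arXiv:2303.10889 — 4 statements merged into one kernel-verified Lean document; each statement's English description precedes it below -/
import Mathlib

section
/- Let D be a rich domain all of whose preferences are top-separable, and let f : D^n → A (n ≥ 2) be a strategy-proof unanimous rule satisfying the tops-only property. For any voter i, preferences P_i, P_i' ∈ D whose tops differ in exactly one component s, and any profile P_{-i} ∈ D^{n-1}, the outcomes f(P_i, P_{-i}) and f(P_i', P_{-i}) agree on every component t ∈ M with t ≠ s. -/
noncomputable section

universe u

/-- A (strict) preference: a complete, antisymmetric, transitive binary relation,
i.e. a strict linear order, on `α`.  `rel a b` reads "`a` is strictly preferred to `b`". -/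
structure Pref (α : Type u) : Type u where
  rel : α → α → Prop
  asymm : ∀ a b, rel a b → ¬ rel b a
  trans : ∀ a b c, rel a b → rel b c → rel a c
  total : ∀ a b, a ≠ b → rel a b ∨ rel b a

namespace Pref

variable {α : Type u}

theorem exists_top [Finite α] [Nonempty α] (P : Pref α) :
    ∃ a : α, ∀ b, b ≠ a → P.rel a b := by
  haveI : IsTrans α P.rel := ⟨P.trans⟩
  haveI : IsIrrefl α P.rel := ⟨fun a h => P.asymm a a h h⟩
  obtain ⟨a, -, ha⟩ :=
    (Finite.wellFounded_of_trans_of_irrefl P.rel).has_min Set.univ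
      ⟨Classical.arbitrary α, trivial⟩
  refine ⟨a, fun b hb => ?_⟩
  rcases P.total a b (fun h => hb h.symm) with h | h
  · exact h
  · exact absurd h (ha b trivial)

/-- The top-ranked alternative `r₁(P)` of a preference. -/
def top [Finite α] [Nonempty α] (P : Pref α) : α := P.exists_top.choose

theorem top_spec [Finite α] [Nonempty α] (P : Pref α) :
    ∀ b, b ≠ P.top → P.rel P.top b := P.exists_top.choose_spec

/-- `rank P a = k` means that `a` is the `k`-th ranked alternative `r_k(P)`. -/
def rank (P : Pref α) (a : α) : ℕ := {b | P.rel b a}.ncard + 1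

/-- The induced marginal preference `[P]^s` on component `s`:
derived from `P` by referring to the off-`s` components of the top alternative. -/
def marg {m : ℕ} {A : Fin m → Type u} [∀ s, Fintype (A s)] [∀ s, Nonempty (A s)]
    (P : Pref (∀ s, A s)) (s : Fin m) : Pref (A s) where
  rel x y := P.rel (Function.update P.top s x) (Function.update P.top s y)
  asymm _ _ h := P.asymm _ _ h
  trans _ _ _ h₁ h₂ := P.trans _ _ _ h₁ h₂
  total x y hxy := P.total _ _ fun h => hxy (by
    have := congrFun h s
    simpa using this)

end Pref

section SocialChoice

variable {m : ℕ} {A : Fin m → Type u}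

/-- `a` and `b` are similar, differing exactly in component `s`: `M(a,b) = {s}`. -/
def SimilarAt (a b : ∀ s, A s) (s : Fin m) : Prop :=
  a s ≠ b s ∧ ∀ t, t ≠ s → a t = b t

/-- The "slice" `(A^s, x^{-s})` of alternatives agreeing with `x` off component `s`. -/
def Slice (s : Fin m) (x : ∀ t, A t) : Set (∀ t, A t) :=
  {a | ∀ t, t ≠ s → a t = x t}

variable [∀ s, Fintype (A s)] [∀ s, Nonempty (A s)]

/-- The induced marginal domain `[D]^s`. -/
def margDomain (D : Set (Pref (∀ s, A s))) (s : Fin m) : Set (Pref (A s)) :=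
  (fun P => Pref.marg P s) '' D

/-- A preference is minimal-richness witnessed: every alternative is some preference's top. -/
def MinimallyRich (D : Set (Pref (∀ s, A s))) : Prop :=
  ∀ a : ∀ s, A s, ∃ P ∈ D, Pref.top P = a

/-- A separable preference. -/
def Separable (P : Pref (∀ s, A s)) : Prop :=
  ∃ Q : ∀ s, Pref (A s), ∀ (s : Fin m) (a b : ∀ t, A t),
    SimilarAt a b s → (Q s).rel (a s) (b s) → P.rel a b

/-- A top-separable preference. -/
def TopSeparable (P : Pref (∀ s, A s)) : Prop :=
  ∀ (s : Fin m) (a b : ∀ t, A t), SimilarAt a b s → a s = Pref.top P s → P.rel a b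

end SocialChoice

/-- Two preferences are complete reversals. -/
def CompleteReversals {α : Type u} (P P' : Pref α) : Prop :=
  ∀ a b, P.rel a b ↔ P'.rel b a

section SCFProps

variable {β : Type u}

/-- Unanimity of a (marginal) social choice function on domain `E`. -/
def Unanimous [Finite β] [Nonempty β] (E : Set (Pref β)) {n : ℕ}
    (f : (Fin n → E) → β) : Prop :=
  ∀ (p : Fin n → E) (a : β), (∀ i, Pref.top (p i).1 = a) → f p = a

/-- Strategy-proofness of a (marginal) social choice function on domain `E`. -/
def StrategyProof (E : Set (Pref β)) {n : ℕ} (f : (Fin n → E) → β) : Prop :=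
  ∀ (p : Fin n → E) (i : Fin n) (Q : E),
    f p ≠ f (Function.update p i Q) →
    (p i).1.rel (f p) (f (Function.update p i Q))

/-- The tops-only property. -/
def TopsOnly [Finite β] [Nonempty β] (E : Set (Pref β)) {n : ℕ}
    (f : (Fin n → E) → β) : Prop :=
  ∀ p p' : Fin n → E, (∀ i, Pref.top (p i).1 = Pref.top (p' i).1) → f p = f p'

end SCFProps

section Decomp

variable {m : ℕ} {A : Fin m → Type u} [∀ s, Fintype (A s)] [∀ s, Nonempty (A s)]

/-- The profile of induced marginal preferences `([P₁]^s, …, [Pₙ]^s)`. -/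
def margProfile (D : Set (Pref (∀ s, A s))) (s : Fin m) {n : ℕ}
    (p : Fin n → D) : Fin n → (margDomain D s) :=
  fun i => ⟨Pref.marg (p i).1 s, ⟨(p i).1, (p i).2, rfl⟩⟩

/-- `f` is decomposed by the family of marginal SCFs `g`. -/
def Decomposable (D : Set (Pref (∀ s, A s))) {n : ℕ}
    (f : (Fin n → D) → (∀ s, A s))
    (g : ∀ s : Fin m, (Fin n → (margDomain D s)) → A s) : Prop :=
  ∀ p : Fin n → D, ∀ s, f p s = g s (margProfile D s p)

/-- A decomposable domain: for every `n ≥ 2` and every SCF, being a strategy-proof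
unanimous rule is equivalent to being decomposable into strategy-proof unanimous
marginal rules. -/
def DecomposableDomain (D : Set (Pref (∀ s, A s))) : Prop :=
  ∀ n : ℕ, 2 ≤ n → ∀ f : (Fin n → D) → (∀ s, A s),
    (Unanimous D f ∧ StrategyProof D f) ↔
      ∃ g : ∀ s : Fin m, (Fin n → (margDomain D s)) → A s,
        Decomposable D f g ∧
        ∀ s, Unanimous (margDomain D s) (g s) ∧ StrategyProof (margDomain D s) (g s)

/-- Diversity⁺: `D` contains two separable preferences that are complete reversals. -/
def DiversityPlus (D : Set (Pref (∀ s, A s))) : Prop :=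
  ∃ P ∈ D, ∃ P' ∈ D, Separable P ∧ Separable P' ∧ CompleteReversals P P'

end Decomp

/-- Adjacency of two preferences: they coincide except that two alternatives ranked
consecutively in `P` occupy the same two positions in reversed order in `P'`. -/
def Adjacent {β : Type u} (P P' : Pref β) : Prop :=
  ∃ a b : β, a ≠ b ∧
    P.rank b = P.rank a + 1 ∧ P'.rank b = P.rank a ∧ P'.rank a = P.rank a + 1 ∧
    ∀ c, c ≠ a → c ≠ b → P.rank c = P'.rank c

section AdjPlus

variable {m : ℕ} {A : Fin m → Type u} [∀ s, Fintype (A s)] [∀ s, Nonempty (A s)]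

/-- Adjacency⁺ of two (separable) preferences. -/
def AdjacentPlus (P P' : Pref (∀ s, A s)) : Prop :=
  Separable P ∧ Separable P' ∧
  ∃ (s : Fin m) (a b : A s), a ≠ b ∧
    (∀ z : ∀ t, A t,
      P.rank (Function.update z s b) = P.rank (Function.update z s a) + 1 ∧
      P'.rank (Function.update z s b) = P.rank (Function.update z s a) ∧
      P'.rank (Function.update z s a) = P.rank (Function.update z s a) + 1) ∧
    ∀ c : ∀ t, A t, c s ≠ a → c s ≠ b → P.rank c = P'.rank c

/-- Edges of the graph `G_{~/~⁺}`: adjacency or adjacency⁺. -/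
def AdjEdge (P P' : Pref (∀ s, A s)) : Prop :=
  Adjacent P P' ∨ AdjacentPlus P P'

end AdjPlus

/-- A path in a graph with edge relation `edge` and vertex set `S`, connecting `x` to `y`. -/
def IsPath {β : Type u} (edge : β → β → Prop) (S : Set β) (x y : β)
    (l : List β) : Prop :=
  2 ≤ l.length ∧ l.Nodup ∧ l.head? = some x ∧ l.getLast? = some y ∧
    (∀ z ∈ l, z ∈ S) ∧ List.Chain' edge l

/-- A path of preferences has `{a,b}`-restoration if the relative ranking of `a` and `b`
flips more than once along the path. -/
def HasRestoration {β : Type u} (l : List (Pref β)) (a b : β) : Prop :=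
  ∃ o p q : Fin l.length, o < p ∧ p < q ∧
    (((l.get o).rel a b ∧ (l.get p).rel b a ∧ (l.get q).rel a b) ∨
     ((l.get o).rel b a ∧ (l.get p).rel a b ∧ (l.get q).rel b a))

section RichDom

variable {m : ℕ} {A : Fin m → Type u} [∀ s, Fintype (A s)] [∀ s, Nonempty (A s)]

/-- The Interior⁺ property. -/
def InteriorPlus (D : Set (Pref (∀ s, A s))) : Prop :=
  ∀ P ∈ D, ∀ P' ∈ D, P ≠ P' → Pref.top P = Pref.top P' →
    ∃ l : List (Pref (∀ s, A s)),
      IsPath AdjEdge D P P' l ∧ ∀ Q ∈ l, Pref.top Q = Pref.top P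

/-- The Exterior⁺ property (including the no-detour condition). -/
def ExteriorPlus (D : Set (Pref (∀ s, A s))) : Prop :=
  ∀ P ∈ D, ∀ P' ∈ D, Pref.top P ≠ Pref.top P' →
    (∀ a b : ∀ s, A s, ∃ l : List (Pref (∀ s, A s)),
        IsPath AdjEdge D P P' l ∧ ¬ HasRestoration l a b) ∧
    ∀ s : Fin m, SimilarAt (Pref.top P) (Pref.top P') s →
      ∃ l : List (Pref (∀ s, A s)),
        IsPath AdjEdge D P P' l ∧ ∀ Q ∈ l, ∀ t, t ≠ s → Pref.top Q t = Pref.top P t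

/-- A rich domain: minimally rich, diversity⁺, Interior⁺ and Exterior⁺. -/
def RichDomain (D : Set (Pref (∀ s, A s))) : Prop :=
  MinimallyRich D ∧ DiversityPlus D ∧ InteriorPlus D ∧ ExteriorPlus D

end RichDom

/-- The weak interval `⟨x,y⟩` w.r.t. a linear order. -/
def wInterval {β : Type u} (lin : LinearOrder β) (x y : β) : Set β :=
  {z | (lin.le x z ∧ lin.le z y) ∨ (lin.le y z ∧ lin.le z x)}

/-- The strict (open) interval `Int⟨x,y⟩` w.r.t. a linear order. -/
def sInterval {β : Type u} (lin : LinearOrder β) (x y : β) : Set β :=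
  {z | (lin.lt x z ∧ lin.lt z y) ∨ (lin.lt y z ∧ lin.lt z x)}

/-- `x` and `y` are marginal thresholds w.r.t. `lin`. -/
def MarginalThresholds {β : Type u} (lin : LinearOrder β) (x y : β) : Prop :=
  x = y ∨ (x ≠ y ∧ 3 ≤ (wInterval lin x y).ncard)

/-- `x` and `y` are strongly connected in the marginal domain `E`: `x ≈ y`. -/
def StronglyConnected {β : Type u} (E : Set (Pref β)) (x y : β) : Prop :=
  ∃ Q ∈ E, ∃ Q' ∈ E,
    Pref.rank Q x = 1 ∧ Pref.rank Q y = 2 ∧ Pref.rank Q' y = 1 ∧ Pref.rank Q' x = 2 ∧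
    ∀ z, z ≠ x → z ≠ y → Pref.rank Q z = Pref.rank Q' z

/-- Edges of the graph `G_≈`. -/
def scEdge {β : Type u} (E : Set (Pref β)) (x y : β) : Prop :=
  x ≠ y ∧ StronglyConnected E x y

/-- The graph with edge relation `edge` on vertex set `B` is connected. -/
def GraphConnectedOn {β : Type u} (edge : β → β → Prop) (B : Set β) : Prop :=
  ∀ x ∈ B, ∀ y ∈ B, x ≠ y → ∃ l : List β, IsPath edge B x y l

/-- `v` is a leaf of the graph with edge relation `edge` on vertex set `B`:
it has a unique neighbor. -/
def IsLeaf {β : Type u} (edge : β → β → Prop) (B : Set β) (v : β) : Prop :=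
  v ∈ B ∧ ∃! w, w ∈ B ∧ edge v w

/-- A hybrid marginal preference on `lin` w.r.t. marginal thresholds `ylo`, `yhi`. -/
def HybridPref {β : Type u} [Finite β] [Nonempty β] (lin : LinearOrder β)
    (ylo yhi : β) (Q : Pref β) : Prop :=
  ∀ a b : β, a ≠ b → a ∈ sInterval lin (Pref.top Q) b →
    a ∉ sInterval lin ylo yhi → Q.rel a b

section MDH

variable {m : ℕ} {A : Fin m → Type u} [∀ s, Fintype (A s)] [∀ s, Nonempty (A s)]

/-- `xlo` and `xhi` are thresholds: marginal thresholds on every component. -/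
def Thresholds (prec : ∀ s, LinearOrder (A s)) (xlo xhi : ∀ s, A s) : Prop :=
  ∀ s, MarginalThresholds (prec s) (xlo s) (xhi s)

/-- A multidimensional hybrid preference on `≺ = ∏ prec s` w.r.t. thresholds `xlo`, `xhi`. -/
def MDHybrid (prec : ∀ s, LinearOrder (A s)) (xlo xhi : ∀ s, A s)
    (P : Pref (∀ s, A s)) : Prop :=
  ∀ (s : Fin m) (a b : ∀ t, A t), SimilarAt a b s →
    (a s = Pref.top P s → P.rel a b) ∧
    (a s ∈ sInterval (prec s) (Pref.top P s) (b s) →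
      a s ∉ sInterval (prec s) (xlo s) (xhi s) → P.rel a b)

/-- A multidimensional single-peaked preference on `≺ = ∏ prec s`. -/
def MSP (prec : ∀ s, LinearOrder (A s)) (P : Pref (∀ s, A s)) : Prop :=
  ∀ (s : Fin m) (a b : ∀ t, A t), SimilarAt a b s →
    a s ∈ wInterval (prec s) (Pref.top P s) (b s) → P.rel a b

/-- A multidimensional hybrid domain on `≺` w.r.t. thresholds `xlo`, `xhi`. -/
def MDHybridDomain (D : Set (Pref (∀ s, A s))) (prec : ∀ s, LinearOrder (A s))
    (xlo xhi : ∀ s, A s) : Prop :=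
  Thresholds prec xlo xhi ∧
  (∀ P ∈ D, MDHybrid prec xlo xhi P) ∧
  ∀ s, GraphConnectedOn (scEdge (margDomain D s)) Set.univ ∧
    (xlo s ≠ xhi s →
      ∀ v, ¬ IsLeaf (scEdge (margDomain D s)) (wInterval (prec s) (xlo s) (xhi s)) v)

/-- Strong connectedness⁺ of two alternatives: `a ≈⁺ b`. -/
def SCPlus (D : Set (Pref (∀ s, A s))) (a b : ∀ s, A s) : Prop :=
  ∃ P ∈ D, ∃ P' ∈ D, Pref.top P = a ∧ Pref.top P' = b ∧ AdjacentPlus P P'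

end MDH

/-- The outcome of the fixed-ballot formula
`max_{J ⊆ N} ( min_{i ∈ J} ( r₁(Qᵢ), b_J ) )`. -/
def fbrValue {β : Type u} (lin : LinearOrder β) {n : ℕ} [Fintype β]
    (bal : Finset (Fin n) → β) (tops : Fin n → β) : β :=
  letI := lin
  letI : DecidableEq β := lin.toDecidableEq
  Finset.univ.sup' ⟨∅, Finset.mem_univ _⟩
    fun J : Finset (Fin n) =>
      (insert (bal J) (J.image tops)).inf' (Finset.insert_nonempty _ _) id

/-- Fixed ballots: ballot unanimity and monotonicity. -/
def FBRBallots {β : Type u} [Fintype β] [Nonempty β] (lin : LinearOrder β) {n : ℕ}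
    (bal : Finset (Fin n) → β) : Prop :=
  bal ∅ = @Finset.min' β lin Finset.univ Finset.univ_nonempty ∧
  bal Finset.univ = @Finset.max' β lin Finset.univ Finset.univ_nonempty ∧
  ∀ J J' : Finset (Fin n), J ⊂ J' → lin.le (bal J) (bal J')

/-- A fixed ballot rule (FBR) on the linear order `lin`. -/
def IsFBR {β : Type u} [Fintype β] [Nonempty β] (lin : LinearOrder β)
    (E : Set (Pref β)) {n : ℕ} (f : (Fin n → E) → β) : Prop :=
  ∃ bal : Finset (Fin n) → β, FBRBallots lin bal ∧
    ∀ p : Fin n → E, f p = fbrValue lin bal fun i => Pref.top (p i).1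

/-- An `(xlo, xhi)`-FBR: an FBR that additionally satisfies the
constrained-dictatorship condition. -/
def IsConstrainedFBR {β : Type u} [Fintype β] [Nonempty β] (lin : LinearOrder β)
    (xlo xhi : β) (E : Set (Pref β)) {n : ℕ} (f : (Fin n → E) → β) : Prop :=
  ∃ bal : Finset (Fin n) → β, FBRBallots lin bal ∧
    (∀ p : Fin n → E, f p = fbrValue lin bal fun i => Pref.top (p i).1) ∧
    ∃ i : Fin n, ∀ J : Finset (Fin n),
      (i ∈ J → lin.le xhi (bal J)) ∧ (i ∉ J → lin.le (bal J) xlo)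

section AuxRank

variable {α : Type u} [Finite α]

theorem aux_one_le_rank (P : Pref α) (x : α) : 1 ≤ P.rank x :=
  Nat.le_add_left 1 _

theorem aux_rank_lt_of_rel (P : Pref α) {x y : α} (h : P.rel x y) :
    P.rank x < P.rank y := by
  have hsub : {b | P.rel b x} ⊆ {b | P.rel b y} := fun c hc => P.trans _ _ _ hc h
  have hss : {b | P.rel b x} ⊂ {b | P.rel b y} := by
    refine ⟨hsub, fun hsub' => ?_⟩
    have hx : P.rel x x := hsub' h
    exact P.asymm x x hx hx
  have := Set.ncard_lt_ncard hss (Set.toFinite _)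
  simpa [Pref.rank] using this

theorem aux_rel_iff_rank_lt (P : Pref α) {x y : α} :
    P.rel x y ↔ P.rank x < P.rank y := by
  refine ⟨aux_rank_lt_of_rel P, fun h => ?_⟩
  have hne : x ≠ y := fun he => by subst he; exact lt_irrefl _ h
  rcases P.total x y hne with h' | h'
  · exact h'
  · have := aux_rank_lt_of_rel P h'
    omega

theorem aux_rank_inj (P : Pref α) {x y : α} (h : P.rank x = P.rank y) : x = y := by
  by_contra hne
  rcases P.total x y hne with h' | h' <;> have := aux_rank_lt_of_rel P h' <;> omega

theorem aux_rank_top [Nonempty α] (P : Pref α) : P.rank P.top = 1 := by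
  have hempty : {b | P.rel b P.top} = ∅ := by
    ext c
    simp only [Set.mem_setOf_eq, Set.mem_empty_iff_false, iff_false]
    intro hc
    rcases eq_or_ne c P.top with rfl | hne
    · exact P.asymm _ _ hc hc
    · exact P.asymm _ _ (P.top_spec c hne) hc
  simp [Pref.rank, hempty]

theorem aux_eq_top_of_rank_eq_one [Nonempty α] (P : Pref α) {x : α}
    (h : P.rank x = 1) : x = P.top :=
  aux_rank_inj P (by rw [h, aux_rank_top])

end AuxRank

/-- Flip lemma for an adjacency step: if the relative ranking of `x` and `y`
reverses, then `x = a` and `y = b`. -/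
theorem aux_flip_adj {β : Type u} (rk rk' : β → ℕ) (a b x y : β)
    (hrb : rk b = rk a + 1) (hr'b : rk' b = rk a) (hr'a : rk' a = rk a + 1)
    (hc : ∀ c, c ≠ a → c ≠ b → rk c = rk' c)
    (hxy : rk x < rk y) (hyx : rk' y < rk' x) : x = a ∧ y = b := by
  rcases eq_or_ne x a with hxa | hxa
  · have e1 : rk x = rk a := congrArg rk hxa
    have e2 : rk' x = rk' a := congrArg rk' hxa
    rcases eq_or_ne y b with hyb | hyb
    · exact ⟨hxa, hyb⟩
    · rcases eq_or_ne y a with hya | hya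
      · have e3 : rk y = rk a := congrArg rk hya
        omega
      · have e3 := hc y hya hyb
        omega
  · rcases eq_or_ne x b with hxb | hxb
    · have e1 : rk x = rk b := congrArg rk hxb
      have e2 : rk' x = rk' b := congrArg rk' hxb
      rcases eq_or_ne y a with hya | hya
      · have e3 : rk y = rk a := congrArg rk hya
        omega
      · rcases eq_or_ne y b with hyb | hyb
        · have e3 : rk y = rk b := congrArg rk hyb
          omega
        · have e3 := hc y hya hyb
          omega
    · have hx0 := hc x hxa hxb
      rcases eq_or_ne y a with hya | hya
      · have e3 : rk y = rk a := congrArg rk hya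
        have e4 : rk' y = rk' a := congrArg rk' hya
        omega
      · rcases eq_or_ne y b with hyb | hyb
        · have e3 : rk y = rk b := congrArg rk hyb
          have e4 : rk' y = rk' b := congrArg rk' hyb
          omega
        · have e3 := hc y hya hyb
          omega

/-- Flip lemma for an adjacency⁺ step: if the relative ranking of `x` and `y`
reverses, then `x` is obtained from `y` by replacing component `s` by `a`. -/
theorem aux_flip_adjplus {m : ℕ} {A : Fin m → Type u}
    (rk rk' : (∀ s, A s) → ℕ) (s : Fin m) (a b : A s)
    (hz : ∀ z : ∀ t, A t,
      rk (Function.update z s b) = rk (Function.update z s a) + 1 ∧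
      rk' (Function.update z s b) = rk (Function.update z s a) ∧
      rk' (Function.update z s a) = rk (Function.update z s a) + 1)
    (hc : ∀ c : ∀ t, A t, c s ≠ a → c s ≠ b → rk c = rk' c)
    (hinj : ∀ u v : ∀ t, A t, rk u = rk v → u = v)
    (x y : ∀ t, A t)
    (hxy : rk x < rk y) (hyx : rk' y < rk' x) :
    x = Function.update y s a := by
  have hupd : ∀ (z : ∀ t, A t) (c : A s), z s = c → Function.update z s c = z := by
    intro z c h; rw [← h]; exact Function.update_eq_self s z
  rcases eq_or_ne (x s) a with hxa | hxa
  · have hxu := hupd x a hxa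
    have hx1 := (hz x).2.2
    rw [hxu] at hx1
    rcases eq_or_ne (y s) a with hya | hya
    · have hyu := hupd y a hya
      have hy1 := (hz y).2.2; rw [hyu] at hy1
      omega
    · rcases eq_or_ne (y s) b with hyb | hyb
      · have hyu := hupd y b hyb
        have hy1 := (hz y).1; rw [hyu] at hy1
        have hy2 := (hz y).2.1; rw [hyu] at hy2
        have hkey : rk x = rk (Function.update y s a) := by omega
        exact hinj _ _ hkey
      · have := hc y hya hyb; omega
  · rcases eq_or_ne (x s) b with hxb | hxb
    · have hxu := hupd x b hxb
      have hx1 := (hz x).1; rw [hxu] at hx1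
      have hx2 := (hz x).2.1; rw [hxu] at hx2
      rcases eq_or_ne (y s) a with hya | hya
      · have hyu := hupd y a hya
        have hy1 := (hz y).2.2; rw [hyu] at hy1
        omega
      · rcases eq_or_ne (y s) b with hyb | hyb
        · have hyu := hupd y b hyb
          have hy1 := (hz y).1; rw [hyu] at hy1
          have hy2 := (hz y).2.1; rw [hyu] at hy2
          omega
        · have := hc y hya hyb; omega
    · have hx0 := hc x hxa hxb
      rcases eq_or_ne (y s) a with hya | hya
      · have hyu := hupd y a hya
        have hy1 := (hz y).2.2; rw [hyu] at hy1
        omega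
      · rcases eq_or_ne (y s) b with hyb | hyb
        · have hyu := hupd y b hyb
          have hy1 := (hz y).1; rw [hyu] at hy1
          have hy2 := (hz y).2.1; rw [hyu] at hy2
          omega
        · have := hc y hya hyb; omega

section AuxMain

variable {m : ℕ} {A : Fin m → Type u} [∀ s, Fintype (A s)] [∀ s, Nonempty (A s)]

/-- One step along the path: an adjacency or adjacency⁺ edge between `R` and `R'`
whose tops agree off component `s` changes the outcome only in component `s`. -/
theorem aux_step (D : Set (Pref (∀ s, A s))) {n : ℕ}
    (f : (Fin n → D) → (∀ s, A s))
    (hsp : StrategyProof D f) (hto : TopsOnly D f)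
    (p : Fin n → D) (i : Fin n) (s : Fin m)
    (R R' : Pref (∀ s, A s)) (hR : R ∈ D) (hR' : R' ∈ D)
    (hedge : AdjEdge R R')
    (htops : ∀ t, t ≠ s → Pref.top R t = Pref.top R' t) :
    ∀ t, t ≠ s →
      f (Function.update p i ⟨R, hR⟩) t = f (Function.update p i ⟨R', hR'⟩) t := by
  classical
  by_cases htopeq : Pref.top R = Pref.top R'
  · have hfe : f (Function.update p i ⟨R, hR⟩) = f (Function.update p i ⟨R', hR'⟩) := by
      apply hto
      intro j
      rcases eq_or_ne j i with rfl | hij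
      · simpa using htopeq
      · simp [Function.update_of_ne hij]
    intro t _; rw [hfe]
  · rcases eq_or_ne (f (Function.update p i ⟨R, hR⟩))
      (f (Function.update p i ⟨R', hR'⟩)) with heq | hne
    · intro t _; rw [heq]
    · have hrel1 : R.rel (f (Function.update p i ⟨R, hR⟩))
          (f (Function.update p i ⟨R', hR'⟩)) := by
        have h1 : Function.update (Function.update p i ⟨R, hR⟩) i ⟨R', hR'⟩
            = Function.update p i ⟨R', hR'⟩ := Function.update_idem ..
        have := hsp (Function.update p i ⟨R, hR⟩) i ⟨R', hR'⟩ (by rw [h1]; exact hne)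
        rw [h1] at this
        simpa [Function.update_self] using this
      have hrel2 : R'.rel (f (Function.update p i ⟨R', hR'⟩))
          (f (Function.update p i ⟨R, hR⟩)) := by
        have h1 : Function.update (Function.update p i ⟨R', hR'⟩) i ⟨R, hR⟩
            = Function.update p i ⟨R, hR⟩ := Function.update_idem ..
        have := hsp (Function.update p i ⟨R', hR'⟩) i ⟨R, hR⟩ (by rw [h1]; exact hne.symm)
        rw [h1] at this
        simpa [Function.update_self] using this
      have hxy := aux_rank_lt_of_rel R hrel1
      have hyx := aux_rank_lt_of_rel R' hrel2
      rcases hedge with hadj | hadjp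
      · -- Adjacent
        obtain ⟨a, b, hab, hrb, hr'b, hr'a, hcr⟩ := hadj
        have h1 : R.rank R.top = 1 := aux_rank_top R
        have hra : R.rank a = 1 := by
          by_contra hra
          apply htopeq
          have hta : R.top ≠ a := fun h => hra (h ▸ h1)
          have htb : R.top ≠ b := fun h => by
            rw [h] at h1
            have := aux_one_le_rank R a
            omega
          have hcc := hcr R.top hta htb
          exact aux_eq_top_of_rank_eq_one R' (by rw [← hcc]; exact h1)
        obtain ⟨hxa, hyb⟩ := aux_flip_adj R.rank R'.rank a b _ _ hrb hr'b hr'a hcr hxy hyx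
        intro t ht
        have hxtop : f (Function.update p i ⟨R, hR⟩) = R.top :=
          hxa.trans (aux_eq_top_of_rank_eq_one R hra)
        have hytop : f (Function.update p i ⟨R', hR'⟩) = R'.top :=
          hyb.trans (aux_eq_top_of_rank_eq_one R' (by rw [hr'b]; exact hra))
        rw [hxtop, hytop]
        exact htops t ht
      · -- AdjacentPlus
        obtain ⟨-, -, s', a, b, hab, hz, hcr⟩ := hadjp
        have hupd : ∀ (z : ∀ t, A t) (c : A s'), z s' = c →
            Function.update z s' c = z := by
          intro z c h; rw [← h]; exact Function.update_eq_self s' z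
        have hs' : s' = s := by
          by_contra hss
          have h1 : R.rank R.top = 1 := aux_rank_top R
          -- top R s' = a
          have hta : R.top s' = a := by
            rcases eq_or_ne (R.top s') a with h | h
            · exact h
            · rcases eq_or_ne (R.top s') b with hb | hb
              · have hu1 := hupd R.top b hb
                have := (hz R.top).1
                rw [hu1] at this
                have := aux_one_le_rank R (Function.update R.top s' a)
                omega
              · have hcc := hcr R.top h hb
                exact absurd (aux_eq_top_of_rank_eq_one R' (by rw [← hcc]; exact h1)) htopeq
          have hu1 := hupd R.top a hta
          have h2 := (hz R.top).2.1
          rw [hu1, h1] at h2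
          have htop' : Function.update R.top s' b = R'.top :=
            aux_eq_top_of_rank_eq_one R' h2
          have hb' : R'.top s' = b := by rw [← htop']; simp
          have := htops s' hss
          rw [hb', hta] at this
          exact hab this
        subst hs'
        have hxx := aux_flip_adjplus R.rank R'.rank s' a b hz hcr
          (fun u v h => aux_rank_inj R h) _ _ hxy hyx
        intro t ht
        rw [hxx]
        exact Function.update_of_ne ht _ _

/-- Propagating `aux_step` along a chain of edges. -/
theorem aux_chain (D : Set (Pref (∀ s, A s))) {n : ℕ}
    (f : (Fin n → D) → (∀ s, A s))
    (hsp : StrategyProof D f) (hto : TopsOnly D f)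
    (p : Fin n → D) (i : Fin n) (s : Fin m) (base : ∀ t, A t) :
    ∀ l : List (Pref (∀ s, A s)), l.Chain' AdjEdge →
      (∀ z ∈ l, z ∈ D) →
      (∀ R ∈ l, ∀ t, t ≠ s → Pref.top R t = base t) →
      ∀ (x : Pref (∀ s, A s)) (hx : x ∈ D) (y : Pref (∀ s, A s)) (hy : y ∈ D),
        l.head? = some x → l.getLast? = some y →
        ∀ t, t ≠ s →
          f (Function.update p i ⟨x, hx⟩) t = f (Function.update p i ⟨y, hy⟩) t := by
  intro l
  induction l with
  | nil => intro _ _ _ x hx y hy hh _ _ _; simp at hh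
  | cons R l ih =>
    intro hchain hmem htops x hx y hy hh hl t ht
    obtain rfl : R = x := by simpa using hh
    cases l with
    | nil =>
      obtain rfl : R = y := by simpa using hl
      rfl
    | cons R' l' =>
      have hedge : AdjEdge R R' := (List.isChain_cons_cons.mp hchain).1
      have hchain' : (R' :: l').Chain' AdjEdge := (List.isChain_cons_cons.mp hchain).2
      have hR' : R' ∈ D := hmem R' (by simp)
      have hstep := aux_step D f hsp hto p i s R R' hx hR' hedge (fun u hu => by
        rw [htops R (by simp) u hu, htops R' (by simp) u hu])
      have hl' : (R' :: l').getLast? = some y := by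
        rw [List.getLast?_cons_cons] at hl; exact hl
      have hrest := ih hchain' (fun z hz => hmem z (List.mem_cons_of_mem _ hz))
        (fun Rr hr => htops Rr (List.mem_cons_of_mem _ hr)) R' hR' y hy rfl hl' t ht
      rw [hstep t ht, hrest]

end AuxMain

/-- if voter `i`'s tops under `P_i` and `P_i'` differ exactly in
component `s`, the outcomes agree on every other component. -/
theorem stmt_9 {m : ℕ} (hm : 2 ≤ m) {A : Fin m → Type u}
    [∀ s, Fintype (A s)] [∀ s, Nonempty (A s)]
    (hcard : ∀ s, 2 ≤ Fintype.card (A s))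
    (D : Set (Pref (∀ s, A s)))
    (hrich : RichDomain D)
    (hts : ∀ P ∈ D, TopSeparable P)
    (n : ℕ) (hn : 2 ≤ n)
    (f : (Fin n → D) → (∀ s, A s))
    (hu : Unanimous D f) (hsp : StrategyProof D f) (hto : TopsOnly D f)
    (p : Fin n → D) (i : Fin n) (Q : D) (s : Fin m)
    (hsim : SimilarAt (Pref.top (p i).1) (Pref.top Q.1) s) :
    ∀ t, t ≠ s → f p t = f (Function.update p i Q) t := by
  classical
  have htopne : Pref.top (p i).1 ≠ Pref.top Q.1 := fun h => hsim.1 (congrFun h s)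
  obtain ⟨-, -, -, hext⟩ := hrich
  obtain ⟨l, hpath, htopsl⟩ := (hext (p i).1 (p i).2 Q.1 Q.2 htopne).2 s hsim
  obtain ⟨hlen, hnd, hhead, hlast, hmemD, hchain⟩ := hpath
  intro t ht
  have hkey := aux_chain D f hsp hto p i s (Pref.top (p i).1) l hchain hmemD htopsl
    (p i).1 (p i).2 Q.1 Q.2 hhead hlast t ht
  have h1 : Function.update p i ⟨(p i).1, (p i).2⟩ = p := by
    have he : (⟨(p i).1, (p i).2⟩ : D) = p i := rfl
    rw [he, Function.update_eq_self]
  have h2 : (⟨Q.1, Q.2⟩ : D) = Q := rfl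
  rw [h1, h2] at hkey
  exact hkey
end
end

section
/- Let D be a rich domain all of whose preferences are top-separable, and let f : D^n → A (n ≥ 2) be a strategy-proof unanimous rule satisfying the tops-only property. For any voter i, preferences P_i, P_i' ∈ D, profile P_{-i} ∈ D^{n-1} and component t ∈ M, if the tops of P_i and P_i' have the same t-th component, then f(P_i, P_{-i}) and f(P_i', P_{-i}) have the same t-th component. -/
noncomputable section

universe u

section AuxFlip

theorem Pref.rank_lt_of_rel {α : Type u} [Finite α] (P : Pref α) {a b : α}
    (h : P.rel a b) : P.rank a < P.rank b := by
  have hsub : {c | P.rel c a} ⊂ {c | P.rel c b} := by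
    rw [Set.ssubset_def]
    refine ⟨fun c hc => P.trans _ _ _ hc h, fun hba => ?_⟩
    have haa : P.rel a a := hba h
    exact P.asymm a a haa haa
  have hlt := Set.ncard_lt_ncard hsub (Set.toFinite _)
  simp only [Pref.rank]
  omega

theorem Pref.eq_of_rank_eq {α : Type u} [Finite α] (P : Pref α) {a b : α}
    (h : P.rank a = P.rank b) : a = b := by
  by_contra hne
  rcases P.total a b hne with hr | hr
  · exact absurd h (Nat.ne_of_lt (P.rank_lt_of_rel hr))
  · exact absurd h.symm (Nat.ne_of_lt (P.rank_lt_of_rel hr))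

/-- Across an adjacent swap, the (ordered) flipped pair is unique. -/
theorem adjacent_flip {β : Type u} [Finite β] {P P' : Pref β} (h : Adjacent P P')
    {x y u v : β} (h1 : P.rel x y) (h2 : P'.rel y x)
    (h3 : P.rel u v) (h4 : P'.rel v u) : x = u ∧ y = v := by
  obtain ⟨a, b, hab, ra, rb, rc, rother⟩ := h
  suffices key : ∀ x y, P.rel x y → P'.rel y x → x = a ∧ y = b by
    obtain ⟨e1, e2⟩ := key _ _ h1 h2
    obtain ⟨e3, e4⟩ := key _ _ h3 h4
    exact ⟨e1.trans e3.symm, e2.trans e4.symm⟩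
  intro x y hxy hyx
  have hx := P.rank_lt_of_rel hxy
  have hy := P'.rank_lt_of_rel hyx
  by_cases hxa : x = a
  · by_cases hyb : y = b
    · exact ⟨hxa, hyb⟩
    · by_cases hya : y = a
      · rw [hxa, hya] at hx; omega
      · have hyo := rother y hya hyb
        rw [hxa] at hx hy; omega
  · by_cases hxb : x = b
    · by_cases hya : y = a
      · rw [hxb, hya] at hx; omega
      · by_cases hyb : y = b
        · rw [hxb, hyb] at hx; omega
        · have hyo := rother y hya hyb
          rw [hxb] at hx hy; omega
    · have hxo := rother x hxa hxb
      by_cases hya : y = a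
      · rw [hya] at hx hy; omega
      · by_cases hyb : y = b
        · rw [hyb] at hx hy; omega
        · have hyo := rother y hya hyb; omega

/-- Across an adjacency⁺ swap at component `s`, every flipped pair is similar at `s`. -/
theorem adjacentPlus_flip {m : ℕ} {A : Fin m → Type u} [∀ s, Fintype (A s)]
    [∀ s, Nonempty (A s)] {P P' : Pref (∀ s, A s)} (h : AdjacentPlus P P') :
    ∃ s : Fin m, ∀ x y, P.rel x y → P'.rel y x → SimilarAt x y s := by
  obtain ⟨-, -, s, a, b, hab, hz, hother⟩ := h
  have keya : ∀ w : ∀ r, A r, w s = a → Function.update w s a = w := fun w hw => by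
    rw [← hw]; exact Function.update_eq_self s w
  have keyb : ∀ w : ∀ r, A r, w s = b → Function.update w s b = w := fun w hw => by
    rw [← hw]; exact Function.update_eq_self s w
  refine ⟨s, fun x y h1 h2 => ?_⟩
  have hx := P.rank_lt_of_rel h1
  have hy := P'.rank_lt_of_rel h2
  by_cases hxa : x s = a
  · by_cases hyb : y s = b
    · -- main case
      have e1 : P.rank (Function.update x s b) = P.rank x + 1 := by
        have := (hz x).1; rwa [keya x hxa] at this
      have e2 : P'.rank x = P.rank x + 1 := by
        have := (hz x).2.2; rwa [keya x hxa] at this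
      have e3 : P'.rank y = P.rank (Function.update y s a) := by
        have := (hz y).2.1; rwa [keyb y hyb] at this
      have e4 : P.rank y = P.rank (Function.update y s a) + 1 := by
        have := (hz y).1; rwa [keyb y hyb] at this
      have e5 : P.rank y = P.rank x + 1 := by omega
      have e6 : y = Function.update x s b := P.eq_of_rank_eq (by rw [e5, e1])
      refine ⟨?_, fun r hr => ?_⟩
      · rw [hxa, hyb]; exact hab
      · rw [e6]; exact (Function.update_of_ne hr b x).symm
    · by_cases hya : y s = a
      · have e2x : P'.rank x = P.rank x + 1 := by
          have := (hz x).2.2; rwa [keya x hxa] at this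
        have e2y : P'.rank y = P.rank y + 1 := by
          have := (hz y).2.2; rwa [keya y hya] at this
        omega
      · have e2x : P'.rank x = P.rank x + 1 := by
          have := (hz x).2.2; rwa [keya x hxa] at this
        have ey : P.rank y = P'.rank y := hother y hya hyb
        omega
  · by_cases hxb : x s = b
    · have e3x : P'.rank x = P.rank (Function.update x s a) := by
        have := (hz x).2.1; rwa [keyb x hxb] at this
      have e4x : P.rank x = P.rank (Function.update x s a) + 1 := by
        have := (hz x).1; rwa [keyb x hxb] at this
      by_cases hya : y s = a
      · have e2y : P'.rank y = P.rank y + 1 := by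
          have := (hz y).2.2; rwa [keya y hya] at this
        omega
      · by_cases hyb : y s = b
        · have e3y : P'.rank y = P.rank (Function.update y s a) := by
            have := (hz y).2.1; rwa [keyb y hyb] at this
          have e4y : P.rank y = P.rank (Function.update y s a) + 1 := by
            have := (hz y).1; rwa [keyb y hyb] at this
          omega
        · have ey : P.rank y = P'.rank y := hother y hya hyb
          omega
    · have ex : P.rank x = P'.rank x := hother x hxa hxb
      by_cases hya : y s = a
      · have e2y : P'.rank y = P.rank y + 1 := by
          have := (hz y).2.2; rwa [keya y hya] at this
        omega
      · by_cases hyb : y s = b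
        · have e3y : P'.rank y = P.rank (Function.update y s a) := by
            have := (hz y).2.1; rwa [keyb y hyb] at this
          have e4y : P.rank y = P.rank (Function.update y s a) + 1 := by
            have := (hz y).1; rwa [keyb y hyb] at this
          omega
        · have ey : P.rank y = P'.rank y := hother y hya hyb
          omega

theorem mem_of_getLast?' {β : Type u} {l : List β} {a : β} (h : l.getLast? = some a) :
    a ∈ l := by
  induction l with
  | nil => simp at h
  | cons x xs ih =>
    cases xs with
    | nil =>
      simp only [List.getLast?_singleton, Option.some.injEq] at h
      simp [h]
    | cons y ys =>
      rw [List.getLast?_cons_cons] at h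
      exact List.mem_cons_of_mem _ (ih h)

end AuxFlip

/-- if voter `i`'s tops under `P_i` and `P_i'` share the `t`-th
component, the outcomes share the `t`-th component. -/
theorem stmt_10 {m : ℕ} (hm : 2 ≤ m) {A : Fin m → Type u}
    [∀ s, Fintype (A s)] [∀ s, Nonempty (A s)]
    (hcard : ∀ s, 2 ≤ Fintype.card (A s))
    (D : Set (Pref (∀ s, A s)))
    (hrich : RichDomain D)
    (hts : ∀ P ∈ D, TopSeparable P)
    (n : ℕ) (hn : 2 ≤ n)
    (f : (Fin n → D) → (∀ s, A s))
    (hu : Unanimous D f) (hsp : StrategyProof D f) (hto : TopsOnly D f)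
    (p : Fin n → D) (i : Fin n) (Q : D) (t : Fin m)
    (htop : Pref.top (p i).1 t = Pref.top Q.1 t) :
    f p t = f (Function.update p i Q) t := by
  classical
  obtain ⟨hmr, -, -, hext⟩ := hrich
  -- the outcome as a function of voter i's (bare) preference
  let g : Pref (∀ s, A s) → (∀ s, A s) := fun P =>
    if h : P ∈ D then f (Function.update p i ⟨P, h⟩) else Pref.top P
  have gdef : ∀ (P) (h : P ∈ D), g P = f (Function.update p i ⟨P, h⟩) :=
    fun P h => dif_pos h
  -- tops-only for g
  have gtops : ∀ P P' (hP : P ∈ D) (hP' : P' ∈ D),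
      Pref.top P = Pref.top P' → g P = g P' := by
    intro P P' hP hP' hpp
    rw [gdef P hP, gdef P' hP']
    apply hto
    intro j
    by_cases hj : j = i
    · subst hj; simpa [Function.update_self] using hpp
    · simp [Function.update_of_ne hj]
  -- strategy-proofness for g
  have gsp : ∀ P P' (hP : P ∈ D) (hP' : P' ∈ D),
      g P ≠ g P' → P.rel (g P) (g P') := by
    intro P P' hP hP' hne
    rw [gdef P hP] at hne ⊢
    rw [gdef P' hP'] at hne ⊢
    have h := hsp (Function.update p i ⟨P, hP⟩) i ⟨P', hP'⟩
    rw [Function.update_idem] at h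
    have h2 := h hne
    rwa [Function.update_self] at h2
  -- one edge of a no-detour path preserves the t-th component of the outcome
  have edge : ∀ (s : Fin m), s ≠ t → ∀ P P' (hP : P ∈ D) (hP' : P' ∈ D),
      AdjEdge P P' → (∀ r, r ≠ s → Pref.top P r = Pref.top P' r) →
      g P t = g P' t := by
    intro s hst P P' hP hP' hadj htops
    by_cases htopeq : Pref.top P = Pref.top P'
    · rw [gtops P P' hP hP' htopeq]
    by_cases hge : g P = g P'
    · rw [hge]
    have ftop1 : P.rel (Pref.top P) (Pref.top P') :=
      P.top_spec (Pref.top P') (fun hh => htopeq hh.symm)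
    have ftop2 : P'.rel (Pref.top P') (Pref.top P) :=
      P'.top_spec (Pref.top P) htopeq
    have fout1 : P.rel (g P) (g P') := gsp P P' hP hP' hge
    have fout2 : P'.rel (g P') (g P) := gsp P' P hP' hP (Ne.symm hge)
    rcases hadj with hA | hA
    · obtain ⟨e1, e2⟩ := adjacent_flip hA fout1 fout2 ftop1 ftop2
      rw [e1, e2]
      exact htops t (Ne.symm hst)
    · obtain ⟨s'', hflip⟩ := adjacentPlus_flip hA
      have sim_top := hflip _ _ ftop1 ftop2
      have sim_out := hflip _ _ fout1 fout2
      have hs : s'' = s := by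
        by_contra hne
        exact sim_top.1 (htops s'' hne)
      subst hs
      exact sim_out.2 t (Ne.symm hst)
  -- along a no-detour path the t-th component of the outcome is constant
  have pathlem : ∀ (s : Fin m), s ≠ t → ∀ (x : ∀ r, A r)
      (l : List (Pref (∀ s, A s))), ∀ (P₀ : Pref (∀ s, A s)),
      List.Chain' AdjEdge (P₀ :: l) → (∀ z ∈ P₀ :: l, z ∈ D) →
      (∀ Q' ∈ P₀ :: l, ∀ r, r ≠ s → Pref.top Q' r = x r) →
      ∀ P ∈ P₀ :: l, g P t = g P₀ t := by
    intro s hst x l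
    induction l with
    | nil =>
      intro P₀ _ _ _ P hP
      simp only [List.mem_singleton] at hP
      rw [hP]
    | cons P₁ rest ih =>
      intro P₀ hchain hD htops P hP
      have hadj : AdjEdge P₀ P₁ := (List.isChain_cons_cons.mp hchain).1
      have hchain' : List.Chain' AdjEdge (P₁ :: rest) := (List.isChain_cons_cons.mp hchain).2
      have hD' : ∀ z ∈ P₁ :: rest, z ∈ D := fun z hz => hD z (List.mem_cons_of_mem _ hz)
      have htops' : ∀ Q' ∈ P₁ :: rest, ∀ r, r ≠ s → Pref.top Q' r = x r :=
        fun Q' hQ' => htops Q' (List.mem_cons_of_mem _ hQ')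
      have h0D : P₀ ∈ D := hD _ (List.mem_cons_self)
      have h1D : P₁ ∈ D := hD _ (List.mem_cons_of_mem _ (List.mem_cons_self))
      have ht0 := htops P₀ (List.mem_cons_self)
      have ht1 := htops P₁ (List.mem_cons_of_mem _ (List.mem_cons_self))
      have e01 : g P₀ t = g P₁ t :=
        edge s hst P₀ P₁ h0D h1D hadj (fun r hr => (ht0 r hr).trans (ht1 r hr).symm)
      rcases List.mem_cons.mp hP with h | h
      · rw [h]
      · rw [ih P₁ hchain' hD' htops' P h, e01]
  -- two preferences whose tops agree off a component s ≠ t give t-equal outcomes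
  have step : ∀ (s : Fin m), s ≠ t → ∀ P P' (hP : P ∈ D) (hP' : P' ∈ D),
      (∀ r, r ≠ s → Pref.top P r = Pref.top P' r) → g P t = g P' t := by
    intro s hst P P' hP hP' htops
    by_cases htopeq : Pref.top P = Pref.top P'
    · rw [gtops P P' hP hP' htopeq]
    · have hsim : SimilarAt (Pref.top P) (Pref.top P') s := by
        refine ⟨?_, fun r hr => htops r hr⟩
        intro hcon
        apply htopeq
        funext r
        by_cases hr : r = s
        · rw [hr]; exact hcon
        · exact htops r hr
      obtain ⟨l, hpath, hl⟩ := (hext P hP P' hP' htopeq).2 s hsim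
      obtain ⟨-, -, hhead, hlast, hmemD, hchain⟩ := hpath
      cases l with
      | nil => simp at hhead
      | cons P₀ rest =>
        have hP0 : P₀ = P := by
          simp only [List.head?_cons, Option.some.injEq] at hhead
          exact hhead
        subst hP0
        have hR' : P' ∈ P₀ :: rest := mem_of_getLast?' hlast
        exact (pathlem s hst (Pref.top P₀) rest P₀ hchain hmemD
          (fun Q' hQ' r hr => hl Q' hQ' r hr) P' hR').symm
  -- chain across several components
  have chain : ∀ (k : ℕ) (x y : ∀ r, A r), x t = y t →
      (Finset.univ.filter (fun r => x r ≠ y r)).card ≤ k →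
      ∀ P P' (hP : P ∈ D) (hP' : P' ∈ D), Pref.top P = x → Pref.top P' = y →
      g P t = g P' t := by
    intro k
    induction k with
    | zero =>
      intro x y hxy hcard P P' hP hP' hPx hP'y
      have hxy' : x = y := by
        funext r
        by_contra hr
        have hmem : r ∈ Finset.univ.filter (fun r => x r ≠ y r) := by simp [hr]
        have := Finset.card_pos.mpr ⟨r, hmem⟩
        omega
      rw [gtops P P' hP hP' (by rw [hPx, hP'y, hxy'])]
    | succ k ih =>
      intro x y hxy hcard P P' hP hP' hPx hP'y
      by_cases heq : x = y
      · rw [gtops P P' hP hP' (by rw [hPx, hP'y, heq])]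
      · have hex : ∃ s, x s ≠ y s := by
          by_contra hc
          push_neg at hc
          exact heq (funext hc)
        obtain ⟨s, hs⟩ := hex
        have hst : s ≠ t := by
          intro h
          exact hs (by rw [h]; exact hxy)
        set x' := Function.update x s (y s) with hx'
        obtain ⟨R'', hR''D, hR''top⟩ := hmr x'
        have st1 : g P t = g R'' t := by
          apply step s hst P R'' hP hR''D
          intro r hr
          rw [hPx, hR''top, hx']
          exact (Function.update_of_ne hr _ _).symm
        have hx't : x' t = y t := by
          rw [hx', Function.update_of_ne (Ne.symm hst)]
          exact hxy
        have hsS : s ∈ Finset.univ.filter (fun r => x r ≠ y r) := by simp [hs]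
        have hsub : Finset.univ.filter (fun r => x' r ≠ y r) ⊆
            (Finset.univ.filter (fun r => x r ≠ y r)).erase s := by
          intro r hr
          simp only [Finset.mem_filter, Finset.mem_univ, true_and] at hr
          rcases eq_or_ne r s with rfl | hrs
          · exact absurd (by rw [hx']; simp) hr
          · refine Finset.mem_erase.mpr ⟨hrs, ?_⟩
            simp only [Finset.mem_filter, Finset.mem_univ, true_and]
            rwa [hx', Function.update_of_ne hrs] at hr
        have hcard' : (Finset.univ.filter (fun r => x' r ≠ y r)).card ≤ k := by
          have h1 := Finset.card_le_card hsub
          have h2 := Finset.card_erase_of_mem hsS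
          omega
        have st2 : g R'' t = g P' t := ih x' y hx't hcard' R'' P' hR''D hP' hR''top hP'y
        rw [st1, st2]
  -- wrap up
  have h1 : f p = g (p i).1 := by
    rw [gdef (p i).1 (p i).2]
    exact congrArg f (Function.update_eq_self i p).symm
  have h2 : f (Function.update p i Q) = g Q.1 := by
    rw [gdef Q.1 Q.2]
  rw [h1, h2]
  exact chain m (Pref.top (p i).1) (Pref.top Q.1) htop
    (le_trans (Finset.card_filter_le _ _) (by simp))
    (p i).1 Q.1 (p i).2 Q.2 rfl rfl
end
end

section
/- Let D be a rich domain that is a decomposable domain. Then for each s ∈ M and all n ≥ 2, every strategy-proof unanimous marginal rule f^s : ([D]^s)^n → A^s satisfies the tops-only property. -/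
noncomputable section

universe u

section Aux

set_option linter.unusedSectionVars false

namespace Pref

variable {α : Type u} [Finite α] [Nonempty α]

omit [Finite α] [Nonempty α] in
theorem not_rel_self (P : Pref α) (a : α) : ¬ P.rel a a :=
  fun h => P.asymm a a h h

theorem top_unique (P : Pref α) {w : α} (hw : ∀ b, b ≠ w → P.rel w b) : w = P.top := by
  by_contra h
  exact P.asymm _ _ (hw P.top (fun hh => h hh.symm)) (P.top_spec w h)

omit [Finite α] [Nonempty α] in
theorem rel_of_ne_of_not_rel (P : Pref α) {a b : α} (hne : a ≠ b) (h : ¬ P.rel a b) :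
    P.rel b a := (P.total a b hne).resolve_left h

theorem rank_lt_of_rel_s13 (P : Pref α) {a b : α} (h : P.rel a b) : P.rank a < P.rank b := by
  have hsub : {c | P.rel c a} ⊂ {c | P.rel c b} := by
    constructor
    · intro c hc; exact P.trans _ _ _ hc h
    · intro hcon
      have ha : a ∈ {c | P.rel c b} := h
      have := hcon ha
      exact P.not_rel_self a this
  have := Set.ncard_lt_ncard hsub (Set.toFinite _)
  simpa [Pref.rank] using this

theorem rel_iff_rank_lt (P : Pref α) {a b : α} (hne : a ≠ b) :
    P.rel a b ↔ P.rank a < P.rank b := by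
  constructor
  · exact P.rank_lt_of_rel_s13
  · intro h
    by_contra hrel
    have := P.rank_lt_of_rel_s13 (P.rel_of_ne_of_not_rel hne hrel)
    omega

theorem rank_injective (P : Pref α) {a b : α} (h : P.rank a = P.rank b) : a = b := by
  by_contra hne
  rcases P.total a b hne with hr | hr
  · have := P.rank_lt_of_rel_s13 hr; omega
  · have := P.rank_lt_of_rel_s13 hr; omega

theorem rank_top (P : Pref α) : P.rank P.top = 1 := by
  have : {c | P.rel c P.top} = ∅ := by
    ext c
    simp only [Set.mem_setOf_eq, Set.mem_empty_iff_false, iff_false]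
    intro hc
    have hne : c ≠ P.top := fun hh => P.not_rel_self P.top (hh ▸ hc)
    exact P.asymm _ _ (P.top_spec c hne) hc
  simp [Pref.rank, this]

theorem one_le_rank (P : Pref α) (a : α) : 1 ≤ P.rank a := by
  simp [Pref.rank]

theorem eq_top_of_rank_eq_one (P : Pref α) {a : α} (h : P.rank a = 1) : a = P.top := by
  by_contra hne
  have := P.rank_lt_of_rel_s13 (P.top_spec a hne)
  have := P.rank_top
  omega

theorem top_marg {m : ℕ} {A : Fin m → Type u} [∀ s, Fintype (A s)] [∀ s, Nonempty (A s)]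
    (P : Pref (∀ s, A s)) (s : Fin m) : (P.marg s).top = P.top s := by
  symm
  apply (P.marg s).top_unique
  intro b hb
  show P.rel (Function.update P.top s (P.top s)) (Function.update P.top s b)
  rw [Function.update_eq_self]
  apply P.top_spec
  intro hcon
  apply hb
  have := congrFun hcon s
  simpa using this

end Pref

end Aux

section Flip

set_option linter.unusedSectionVars false
set_option maxHeartbeats 1000000

variable {m : ℕ} {A : Fin m → Type u} [∀ s, Fintype (A s)] [∀ s, Nonempty (A s)]

/-- A pair whose relative ranking flips between `V` and `V'`. -/
def FlipPair (V V' : Pref (∀ s, A s)) (α β : ∀ s, A s) : Prop :=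
  V.rel α β ∧ V'.rel β α

theorem FlipPair.ne {V V' : Pref (∀ s, A s)} {α β} (h : FlipPair V V' α β) : α ≠ β := by
  rintro rfl; exact V.not_rel_self α h.1

theorem adjacent_flip_core {V V' : Pref (∀ s, A s)} {a0 b0 : ∀ s, A s}
    (hne : a0 ≠ b0)
    (h1 : V.rank b0 = V.rank a0 + 1) (h2 : V'.rank b0 = V.rank a0)
    (h3 : V'.rank a0 = V.rank a0 + 1)
    (h4 : ∀ c, c ≠ a0 → c ≠ b0 → V.rank c = V'.rank c)
    {α β : ∀ s, A s} (h : FlipPair V V' α β) : α = a0 ∧ β = b0 := by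
  have hαβ : V.rank α < V.rank β := V.rank_lt_of_rel_s13 h.1
  have hβα : V'.rank β < V'.rank α := V'.rank_lt_of_rel_s13 h.2
  by_cases hα1 : α = a0
  · subst hα1
    by_cases hβ1 : β = b0
    · exact ⟨rfl, hβ1⟩
    · by_cases hβ2 : β = α
      · subst hβ2; omega
      · -- β ∉ {a0, b0} : its rank is unchanged
        have := h4 β hβ2 hβ1
        -- rank β = rank α + 1 = rank b0, injectivity
        have hβb : V.rank β = V.rank b0 := by omega
        exact absurd (V.rank_injective hβb) hβ1
  · by_cases hα2 : α = b0
    · subst hα2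
      by_cases hβ1 : β = a0
      · subst hβ1; omega
      · by_cases hβ2 : β = α
        · subst hβ2; omega
        · have := h4 β hβ1 hβ2; omega
    · have hα := h4 α hα1 hα2
      by_cases hβ1 : β = a0
      · subst hβ1; omega
      · by_cases hβ2 : β = b0
        · subst hβ2; omega
        · have := h4 β hβ1 hβ2; omega

theorem aplus_flip_core {V V' : Pref (∀ s, A s)} {s₀ : Fin m} {a b : A s₀}
    (hne : a ≠ b)
    (hz : ∀ z : ∀ t, A t,
      V.rank (Function.update z s₀ b) = V.rank (Function.update z s₀ a) + 1 ∧
      V'.rank (Function.update z s₀ b) = V.rank (Function.update z s₀ a) ∧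
      V'.rank (Function.update z s₀ a) = V.rank (Function.update z s₀ a) + 1)
    (h4 : ∀ c : ∀ t, A t, c s₀ ≠ a → c s₀ ≠ b → V.rank c = V'.rank c)
    {α β : ∀ s, A s} (h : FlipPair V V' α β) :
    α s₀ = a ∧ β = Function.update α s₀ b := by
  have hαβ : V.rank α < V.rank β := V.rank_lt_of_rel_s13 h.1
  have hβα : V'.rank β < V'.rank α := V'.rank_lt_of_rel_s13 h.2
  have keyA : ∀ w : ∀ t, A t, w s₀ = a →
      (V'.rank w = V.rank w + 1 ∧ V.rank (Function.update w s₀ b) = V.rank w + 1 ∧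
        V'.rank (Function.update w s₀ b) = V.rank w) := by
    intro w hw
    have hupd : Function.update w s₀ a = w := by
      rw [← hw]; exact Function.update_eq_self _ _
    have := hz w
    rw [hupd] at this
    exact ⟨this.2.2, this.1, this.2.1⟩
  have keyB : ∀ w : ∀ t, A t, w s₀ = b →
      (V.rank w = V.rank (Function.update w s₀ a) + 1 ∧
        V'.rank w = V.rank (Function.update w s₀ a)) := by
    intro w hw
    have hupd : Function.update w s₀ b = w := by
      rw [← hw]; exact Function.update_eq_self _ _
    have := hz w
    rw [hupd] at this
    exact ⟨this.1, this.2.1⟩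
  by_cases hα1 : α s₀ = a
  · by_cases hβ1 : β s₀ = b
    · -- the good case
      refine ⟨hα1, ?_⟩
      obtain ⟨e1, e2, e3⟩ := keyA α hα1
      obtain ⟨f1, f2⟩ := keyB β hβ1
      have hrk : V.rank β = V.rank α + 1 := by omega
      have : V.rank (Function.update α s₀ b) = V.rank β := by omega
      exact (V.rank_injective this).symm
    · by_cases hβ2 : β s₀ = a
      · obtain ⟨e1, _, _⟩ := keyA α hα1
        obtain ⟨g1, _, _⟩ := keyA β hβ2
        omega
      · have := h4 β hβ2 hβ1
        obtain ⟨e1, _, _⟩ := keyA α hα1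
        omega
  · by_cases hα2 : α s₀ = b
    · obtain ⟨f1, f2⟩ := keyB α hα2
      by_cases hβ1 : β s₀ = a
      · obtain ⟨e1, _, _⟩ := keyA β hβ1; omega
      · by_cases hβ2 : β s₀ = b
        · obtain ⟨g1, g2⟩ := keyB β hβ2; omega
        · have := h4 β hβ1 hβ2; omega
    · have hα := h4 α hα1 hα2
      by_cases hβ1 : β s₀ = a
      · obtain ⟨e1, _, _⟩ := keyA β hβ1; omega
      · by_cases hβ2 : β s₀ = b
        · obtain ⟨f1, f2⟩ := keyB β hβ2; omega
        · have := h4 β hβ1 hβ2; omega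

theorem flip_master {V V' : Pref (∀ s, A s)} (hedge : AdjEdge V V')
    {α β α' β' : ∀ s, A s}
    (h : FlipPair V V' α β) (h' : FlipPair V V' α' β') :
    (α = α' ∧ β = β') ∨
      ∃ (s₀ : Fin m) (a b : A s₀), a ≠ b ∧
        α s₀ = a ∧ β = Function.update α s₀ b ∧
        α' s₀ = a ∧ β' = Function.update α' s₀ b := by
  rcases hedge with hadj | hadj
  · obtain ⟨a0, b0, hne, h1, h2, h3, h4⟩ := hadj
    obtain ⟨e1, e2⟩ := adjacent_flip_core hne h1 h2 h3 h4 h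
    obtain ⟨f1, f2⟩ := adjacent_flip_core hne h1 h2 h3 h4 h'
    exact Or.inl ⟨e1.trans f1.symm, e2.trans f2.symm⟩
  · obtain ⟨_, _, s₀, a, b, hne, hz, h4⟩ := hadj
    obtain ⟨e1, e2⟩ := aplus_flip_core hne hz h4 h
    obtain ⟨f1, f2⟩ := aplus_flip_core hne hz h4 h'
    exact Or.inr ⟨s₀, a, b, hne, e1, e2, f1, f2⟩

/-- Uniqueness of the flip pair, given that both pairs live in the slice of `s`. -/
theorem flip_unique {V V' : Pref (∀ s, A s)} (hedge : AdjEdge V V') (s : Fin m)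
    {α β α' β' : ∀ s, A s}
    (h : FlipPair V V' α β) (h' : FlipPair V V' α' β')
    (hs1 : ∀ t, t ≠ s → α t = β t) (hs2 : ∀ t, t ≠ s → α' t = α t)
    (hs3 : ∀ t, t ≠ s → β' t = α t) : α' = α ∧ β' = β := by
  rcases flip_master hedge h h' with ⟨e1, e2⟩ | ⟨s₀, a, b, hne, e1, e2, f1, f2⟩
  · exact ⟨e1.symm, e2.symm⟩
  · have hs₀ : s₀ = s := by
      by_contra hcon
      have : α s₀ = β s₀ := hs1 s₀ hcon
      rw [e2] at this
      simp [Function.update_self] at this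
      rw [e1] at this
      exact hne this
    subst hs₀
    have hαα : α' = α := by
      funext t
      by_cases ht : t = s₀
      · subst ht; rw [e1, f1]
      · exact hs2 t ht
    refine ⟨hαα, ?_⟩
    funext t
    by_cases ht : t = s₀
    · subst ht
      rw [e2, f2, hαα]
    · rw [hs3 t ht, hs1 t ht]

/-- Two flips with the same second element have equal first elements. -/
theorem flip_flip_left_eq {V V' : Pref (∀ s, A s)} (hedge : AdjEdge V V')
    {α β e : ∀ s, A s}
    (h : FlipPair V V' α e) (h' : FlipPair V V' β e) : α = β := by
  rcases flip_master hedge h h' with ⟨e1, _⟩ | ⟨s₀, a, b, hne, e1, e2, f1, f2⟩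
  · exact e1
  · funext t
    by_cases ht : t = s₀
    · subst ht; rw [e1, f1]
    · have h1 := congrFun e2 t
      have h2 := congrFun f2 t
      rw [Function.update_of_ne ht] at h1 h2
      rw [← h1, h2]

/-- Flip structure when the tops of the two adjacent preferences differ. -/
theorem top_flip {V V' : Pref (∀ s, A s)} (hedge : AdjEdge V V')
    (htne : Pref.top V ≠ Pref.top V')
    {α β : ∀ s, A s} (h : FlipPair V V' α β) :
    (α = Pref.top V ∧ β = Pref.top V') ∨
      ∃ s₀ : Fin m, SimilarAt (Pref.top V) (Pref.top V') s₀ ∧ SimilarAt α β s₀ := by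
  rcases hedge with hadj | hadj
  · obtain ⟨a0, b0, hne, h1, h2, h3, h4⟩ := hadj
    obtain ⟨e1, e2⟩ := adjacent_flip_core hne h1 h2 h3 h4 h
    left
    have hta : Pref.top V = a0 := by
      by_cases hA : Pref.top V = a0
      · exact hA
      · by_cases hB : Pref.top V = b0
        · exfalso
          have := V.rank_top
          rw [hB] at this
          have := V.one_le_rank a0
          omega
        · exfalso
          have hr := h4 _ hA hB
          rw [V.rank_top] at hr
          exact htne (V'.eq_top_of_rank_eq_one hr.symm ▸ rfl)
    have htb : Pref.top V' = b0 := by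
      by_cases hA : Pref.top V' = a0
      · exfalso
        have := V'.rank_top
        rw [hA, h3] at this
        have := V.one_le_rank a0
        omega
      · by_cases hB : Pref.top V' = b0
        · exact hB
        · exfalso
          have hr := h4 _ hA hB
          rw [V'.rank_top] at hr
          exact htne ((V.eq_top_of_rank_eq_one hr).symm ▸ rfl)
    exact ⟨e1.trans hta.symm, e2.trans htb.symm⟩
  · obtain ⟨_, _, s₀, a, b, hne, hz, h4⟩ := hadj
    obtain ⟨e1, e2⟩ := aplus_flip_core hne hz h4 h
    right
    refine ⟨s₀, ?_, ?_⟩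
    · -- tops are similar at s₀
      have hta : Pref.top V s₀ = a := by
        by_cases hA : Pref.top V s₀ = a
        · exact hA
        · by_cases hB : Pref.top V s₀ = b
          · exfalso
            have hupd : Function.update (Pref.top V) s₀ b = Pref.top V := by
              rw [← hB]; exact Function.update_eq_self _ _
            have := (hz (Pref.top V)).1
            rw [hupd, V.rank_top] at this
            have := V.one_le_rank (Function.update (Pref.top V) s₀ a)
            omega
          · exfalso
            have hr := h4 _ hA hB
            rw [V.rank_top] at hr
            exact htne (V'.eq_top_of_rank_eq_one hr.symm ▸ rfl)
      have htb : Pref.top V' = Function.update (Pref.top V) s₀ b := by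
        have hupd : Function.update (Pref.top V) s₀ a = Pref.top V := by
          rw [← hta]; exact Function.update_eq_self _ _
        have := (hz (Pref.top V)).2.1
        rw [hupd, V.rank_top] at this
        exact (V'.eq_top_of_rank_eq_one this).symm
      constructor
      · rw [htb, Function.update_self, hta]; exact hne
      · intro t ht
        rw [htb, Function.update_of_ne ht]
    · constructor
      · rw [e2, Function.update_self, e1]; exact hne
      · intro t ht
        rw [e2, Function.update_of_ne ht]

end Flip

section Paths

set_option linter.unusedSectionVars false

theorem path_induct {β : Type u} (edge : β → β → Prop) (Z : β → Prop) (Inv : β → Prop)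
    (hstep : ∀ u v, Z u → Z v → edge u v → Inv u → Inv v) :
    ∀ (l : List β), l.Chain' edge → (∀ z ∈ l, Z z) → ∀ a b,
      l.head? = some a → l.getLast? = some b → Inv a → Inv b := by
  intro l
  induction l with
  | nil => intro _ _ a b h; simp at h
  | cons x t ih =>
    intro hchain hmem a b hh hl hInv
    have hax : a = x := by simpa using hh.symm
    subst hax
    cases t with
    | nil =>
      have : b = a := by simpa using hl.symm
      subst this; exact hInv
    | cons y t' =>
      have hedge : edge a y := (List.isChain_cons_cons.1 hchain).1
      have hmem' : ∀ z ∈ (y :: t'), Z z := fun z hz => hmem z (List.mem_cons_of_mem _ hz)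
      have hInvy : Inv y :=
        hstep a y (hmem a (List.mem_cons_self)) (hmem y (by simp)) hedge hInv
      exact ih (List.isChain_cons_cons.1 hchain).2 hmem' y b rfl
        (by simpa using hl) hInvy

theorem hasRestoration_swap {β : Type u} {l : List (Pref β)} {a b : β}
    (h : HasRestoration l a b) : HasRestoration l b a := by
  obtain ⟨o, p, q, h1, h2, h3⟩ := h
  exact ⟨o, p, q, h1, h2, h3.symm⟩

theorem orient_const {β : Type u} {l : List (Pref β)} {a b : β}
    (hnr : ¬ HasRestoration l a b) {x y : Pref β}
    (hh : l.head? = some x) (hl : l.getLast? = some y)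
    (hx : x.rel a b) (hy : y.rel a b) : ∀ z ∈ l, z.rel a b := by
  intro z hz
  by_contra hzrel
  obtain ⟨p, hp⟩ := List.mem_iff_get.1 hz
  have hlen : 0 < l.length := List.length_pos_iff.2 (by rintro rfl; simp at hh)
  have hget0 : l.get ⟨0, hlen⟩ = x := by
    cases l with
    | nil => simp at hh
    | cons u t => simpa using hh
  have hlen1 : l.length - 1 < l.length := by omega
  have hgetlast : l.get ⟨l.length - 1, hlen1⟩ = y := by
    have h1 : l ≠ [] := by rintro rfl; simp at hh
    have : l.getLast h1 = l.get ⟨l.length - 1, hlen1⟩ := by simp [List.getLast_eq_getElem]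
    rw [List.getLast?_eq_getLast h1] at hl
    rw [← this]
    simpa using hl
  have hp0 : (0 : ℕ) < p.val := by
    rcases Nat.eq_zero_or_pos p.val with h0 | h0
    · exfalso
      have : l.get p = x := by
        rw [← hget0]; congr 1; exact Fin.ext h0
      rw [this] at hp
      exact hzrel (hp ▸ hx)
    · exact h0
  have hpl : p.val < l.length - 1 := by
    rcases Nat.lt_or_ge p.val (l.length - 1) with h0 | h0
    · exact h0
    · exfalso
      have hpv : p.val = l.length - 1 := by omega
      have : l.get p = y := by
        rw [← hgetlast]; congr 1; exact Fin.ext hpv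
      rw [this] at hp
      exact hzrel (hp ▸ hy)
  apply hnr
  refine ⟨⟨0, hlen⟩, p, ⟨l.length - 1, hlen1⟩, ?_, ?_, Or.inl ⟨?_, ?_, ?_⟩⟩
  · exact hp0
  · exact hpl
  · rw [hget0]; exact hx
  · rw [hp]
    have hab : a ≠ b := by rintro rfl; exact x.not_rel_self a hx
    exact z.rel_of_ne_of_not_rel hab hzrel
  · rw [hgetlast]; exact hy

end Paths

section Plumbing

set_option linter.unusedSectionVars false
set_option maxHeartbeats 1000000

variable {m : ℕ} {A : Fin m → Type u} [∀ s, Fintype (A s)] [∀ s, Nonempty (A s)]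
variable (D : Set (Pref (∀ s, A s))) (s : Fin m) {n : ℕ}

/-- The marginal dictatorship of voter `i` on component `t`. -/
def dictRule (i : Fin n) (t : Fin m) : (Fin n → (margDomain D t)) → A t :=
  fun q => Pref.top (q i).1

theorem dictRule_unanimous (i : Fin n) (t : Fin m) :
    Unanimous (margDomain D t) (dictRule D i t) := fun p a h => h i

theorem dictRule_sp (i : Fin n) (t : Fin m) :
    StrategyProof (margDomain D t) (dictRule D i t) := by
  intro p j Q h
  by_cases hj : j = i
  · subst hj
    have hq : dictRule D j t (Function.update p j Q) = Pref.top Q.1 := by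
      simp [dictRule]
    rw [hq]
    exact (p j).1.top_spec _ (fun hc => h (by rw [hq, hc]; rfl))
  · exfalso
    apply h
    show Pref.top (p i).1 = Pref.top ((Function.update p j Q) i).1
    rw [Function.update_of_ne (fun hc => hj hc.symm)]

variable (fs : (Fin n → (margDomain D s)) → A s)

/-- The family of marginal rules: `fs` on component `s`, dictatorship of `i` elsewhere. -/
def ghat (i : Fin n) : ∀ t : Fin m, (Fin n → (margDomain D t)) → A t :=
  fun t => if h : t = s then (by subst h; exact fs) else dictRule D i t

theorem ghat_s (i : Fin n) : ghat D s fs i s = fs := by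
  simp [ghat]

theorem ghat_ne (i : Fin n) (t : Fin m) (ht : t ≠ s) :
    ghat D s fs i t = dictRule D i t := by
  simp [ghat, ht]

/-- The composed SCF on the full domain. -/
def fhat (i : Fin n) : (Fin n → D) → (∀ t, A t) :=
  fun p t => ghat D s fs i t (margProfile D t p)

theorem fhat_s (i : Fin n) (p : Fin n → D) :
    fhat D s fs i p s = fs (margProfile D s p) := by
  show ghat D s fs i s (margProfile D s p) = _
  rw [ghat_s]

theorem fhat_ne (i : Fin n) (p : Fin n → D) (t : Fin m) (ht : t ≠ s) :
    fhat D s fs i p t = Pref.top (p i).1 t := by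
  show ghat D s fs i t (margProfile D t p) = _
  rw [ghat_ne D s fs i t ht]
  show Pref.top ((p i).1.marg t) = _
  exact Pref.top_marg _ t

theorem fhat_good (hdec : DecomposableDomain D) (hn : 2 ≤ n)
    (hu : Unanimous (margDomain D s) fs) (hsp : StrategyProof (margDomain D s) fs)
    (i : Fin n) : Unanimous D (fhat D s fs i) ∧ StrategyProof D (fhat D s fs i) := by
  apply (hdec n hn (fhat D s fs i)).2
  refine ⟨ghat D s fs i, fun p t => rfl, ?_⟩
  intro t
  by_cases ht : t = s
  · subst ht; rw [ghat_s]; exact ⟨hu, hsp⟩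
  · rw [ghat_ne D s fs i t ht]
    exact ⟨dictRule_unanimous D i t, dictRule_sp D i t⟩

theorem margProfile_update (t : Fin m) (p : Fin n → D) (i : Fin n) (V : D) :
    margProfile D t (Function.update p i V) =
      Function.update (margProfile D t p) i ⟨V.1.marg t, ⟨V.1, V.2, rfl⟩⟩ := by
  funext j
  by_cases hj : j = i
  · subst hj
    apply Subtype.ext
    show ((Function.update p j V) j).1.marg t = _
    rw [Function.update_self, Function.update_self]
  · apply Subtype.ext
    show ((Function.update p i V) j).1.marg t =
      ((Function.update (margProfile D t p) i ⟨V.1.marg t, ⟨V.1, V.2, rfl⟩⟩) j).1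
    rw [Function.update_of_ne hj, Function.update_of_ne hj]
    rfl

theorem fs_flip (hsp : StrategyProof (margDomain D s) fs)
    (q : Fin n → (margDomain D s)) (i : Fin n) (Q' : (margDomain D s))
    (htop : Pref.top Q'.1 = Pref.top ((q i).1))
    (hne : fs q ≠ fs (Function.update q i Q')) :
    fs q ≠ Pref.top ((q i).1) ∧ fs (Function.update q i Q') ≠ Pref.top ((q i).1) := by
  have h1 := hsp q i Q' hne
  have hqq : Function.update (Function.update q i Q') i (q i) = q := by
    rw [Function.update_idem, Function.update_eq_self]
  have h2 : Q'.1.rel (fs (Function.update q i Q')) (fs q) := by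
    have h2' := hsp (Function.update q i Q') i (q i) (by rw [hqq]; exact Ne.symm hne)
    rw [hqq] at h2'
    have : ((Function.update q i Q') i).1 = Q'.1 := by rw [Function.update_self]
    rw [this] at h2'
    exact h2'
  constructor
  · intro hx
    have hx' : fs q = Pref.top Q'.1 := by rw [hx, htop]
    have hyx : fs (Function.update q i Q') ≠ Pref.top Q'.1 := by
      rw [← hx']; exact Ne.symm hne
    exact Q'.1.asymm _ _ h2 (hx' ▸ Q'.1.top_spec _ hyx)
  · intro hy
    have hxy : fs q ≠ Pref.top ((q i).1) := by
      rw [← hy]; exact hne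
    exact (q i).1.asymm _ _ h1 (hy ▸ (q i).1.top_spec _ hxy)

theorem fs_top_outcome (hu : Unanimous (margDomain D s) fs) (p : Fin n → D) (τ : A s)
    (h : ∀ j, Pref.top ((p j).1) s = τ) : fs (margProfile D s p) = τ := by
  apply hu
  intro j
  show Pref.top ((p j).1.marg s) = τ
  rw [Pref.top_marg]
  exact h j

end Plumbing

section Core

set_option linter.unusedSectionVars false
set_option maxHeartbeats 4000000

variable {m : ℕ} {A : Fin m → Type u} [∀ s, Fintype (A s)] [∀ s, Nonempty (A s)]
variable (D : Set (Pref (∀ s, A s))) (s : Fin m) {n : ℕ}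
variable (fs : (Fin n → (margDomain D s)) → A s)

theorem core_const (hdec : DecomposableDomain D) (hn : 2 ≤ n)
    (hu : Unanimous (margDomain D s) fs) (hsp : StrategyProof (margDomain D s) fs)
    (hExt : ExteriorPlus D) (i : Fin n)
    {W W' : Pref (∀ t, A t)} (hW : W ∈ D) (hW' : W' ∈ D)
    (hedge : AdjEdge W W') (htopWW : Pref.top W = Pref.top W')
    (r : Fin n → D) :
    fhat D s fs i (Function.update r i ⟨W, hW⟩) =
      fhat D s fs i (Function.update r i ⟨W', hW'⟩) := by
  obtain ⟨hUf, hSPf⟩ := fhat_good D s fs hdec hn hu hsp i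
  by_contra hne
  set F := fhat D s fs i with hF
  set wa := F (Function.update r i ⟨W, hW⟩) with hwa
  set wb := F (Function.update r i ⟨W', hW'⟩) with hwb
  have hne' : wa ≠ wb := hne
  have hflip : FlipPair W W' wa wb := by
    constructor
    · have h1 := hSPf (Function.update r i ⟨W, hW⟩) i ⟨W', hW'⟩
        (by rw [Function.update_idem]; exact hne')
      rw [Function.update_idem, Function.update_self] at h1
      exact h1
    · have h2 := hSPf (Function.update r i ⟨W', hW'⟩) i ⟨W, hW⟩
        (by rw [Function.update_idem]; exact (Ne.symm hne'))
      rw [Function.update_idem, Function.update_self] at h2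
      exact h2
  have hoffa : ∀ t, t ≠ s → wa t = Pref.top W t := by
    intro t ht
    rw [hwa, hF, fhat_ne D s fs i _ t ht, Function.update_self]
  have hoffb : ∀ t, t ≠ s → wb t = Pref.top W t := by
    intro t ht
    rw [hwb, hF, fhat_ne D s fs i _ t ht, Function.update_self, ← htopWW]
  have hsne : wa s ≠ wb s := by
    intro hcon
    apply hne'
    funext t
    by_cases ht : t = s
    · subst ht; exact hcon
    · rw [hoffa t ht, hoffb t ht]
  have hτa : wa s ≠ Pref.top W s ∧ wb s ≠ Pref.top W s := by
    have e1 : wa s = fs (Function.update (margProfile D s r) i ⟨W.marg s, ⟨W, hW, rfl⟩⟩) := by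
      rw [hwa, hF, fhat_s, margProfile_update]
    have e2 : wb s = fs (Function.update
        (Function.update (margProfile D s r) i ⟨W.marg s, ⟨W, hW, rfl⟩⟩) i
          ⟨W'.marg s, ⟨W', hW', rfl⟩⟩) := by
      rw [Function.update_idem, hwb, hF, fhat_s, margProfile_update]
    have htopq : Pref.top (⟨W'.marg s, ⟨W', hW', rfl⟩⟩ : (margDomain D s)).1 =
        Pref.top (((Function.update (margProfile D s r) i
          ⟨W.marg s, ⟨W, hW, rfl⟩⟩) i).1) := by
      rw [Function.update_self]
      show Pref.top (W'.marg s) = Pref.top (W.marg s)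
      rw [Pref.top_marg, Pref.top_marg, htopWW]
    have hneq : fs (Function.update (margProfile D s r) i ⟨W.marg s, ⟨W, hW, rfl⟩⟩) ≠
        fs (Function.update (Function.update (margProfile D s r) i
          ⟨W.marg s, ⟨W, hW, rfl⟩⟩) i ⟨W'.marg s, ⟨W', hW', rfl⟩⟩) := by
      rw [← e1, ← e2]; exact hsne
    have hmain := fs_flip D s fs hsp _ i _ htopq hneq
    have htopW : Pref.top (((Function.update (margProfile D s r) i
        ⟨W.marg s, ⟨W, hW, rfl⟩⟩) i).1) = Pref.top W s := by
      rw [Function.update_self]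
      show Pref.top (W.marg s) = Pref.top W s
      rw [Pref.top_marg]
    rw [htopW] at hmain
    rw [e1, e2]
    exact hmain
  -- the one-voter-move step
  have step : ∀ (r' : Fin n → D) (j : Fin n), j ≠ i →
      ∀ (c d : ∀ t, A t),
      ((c = wa ∧ d = wb) ∨ (c = wb ∧ d = wa)) →
      ∀ (u v : Pref (∀ t, A t)) (hu' : u ∈ D) (hv' : v ∈ D),
      AdjEdge u v → u.rel c d → v.rel c d →
      (F (Function.update (Function.update r' j ⟨u, hu'⟩) i ⟨W, hW⟩) = wa ∧
       F (Function.update (Function.update r' j ⟨u, hu'⟩) i ⟨W', hW'⟩) = wb) →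
      (F (Function.update (Function.update r' j ⟨v, hv'⟩) i ⟨W, hW⟩) = wa ∧
       F (Function.update (Function.update r' j ⟨v, hv'⟩) i ⟨W', hW'⟩) = wb) := by
    intro r' j hji c d hcd u v hu' hv' hedgeuv hucd hvcd hI
    obtain ⟨hIA, hIB⟩ := hI
    have hij : i ≠ j := Ne.symm hji
    set pu := Function.update (Function.update r' j ⟨u, hu'⟩) i ⟨W, hW⟩ with hpu
    set pv := Function.update (Function.update r' j ⟨v, hv'⟩) i ⟨W, hW⟩ with hpv
    set puB := Function.update (Function.update r' j ⟨u, hu'⟩) i ⟨W', hW'⟩ with hpuB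
    set pvB := Function.update (Function.update r' j ⟨v, hv'⟩) i ⟨W', hW'⟩ with hpvB
    have hpv_pu : Function.update pu j ⟨v, hv'⟩ = pv := by
      rw [hpu, hpv, Function.update_comm hij, Function.update_idem]
    have hpu_pv : Function.update pv j ⟨u, hu'⟩ = pu := by
      rw [hpu, hpv, Function.update_comm hij, Function.update_idem]
    have hpvB_pv : Function.update pv i ⟨W', hW'⟩ = pvB := by
      rw [hpv, hpvB, Function.update_idem]
    have hpv_pvB : Function.update pvB i ⟨W, hW⟩ = pv := by
      rw [hpv, hpvB, Function.update_idem]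
    have hpvB_puB : Function.update puB j ⟨v, hv'⟩ = pvB := by
      rw [hpuB, hpvB, Function.update_comm hij, Function.update_idem]
    have hpuB_pvB : Function.update pvB j ⟨u, hu'⟩ = puB := by
      rw [hpuB, hpvB, Function.update_comm hij, Function.update_idem]
    have hpuj : pu j = ⟨u, hu'⟩ := by
      rw [hpu, Function.update_of_ne hji, Function.update_self]
    have hpvj : pv j = ⟨v, hv'⟩ := by
      rw [hpv, Function.update_of_ne hji, Function.update_self]
    have hpuBj : puB j = ⟨u, hu'⟩ := by
      rw [hpuB, Function.update_of_ne hji, Function.update_self]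
    have hpvBj : pvB j = ⟨v, hv'⟩ := by
      rw [hpvB, Function.update_of_ne hji, Function.update_self]
    have hpvi : pv i = ⟨W, hW⟩ := by rw [hpv, Function.update_self]
    have hpvBi : pvB i = ⟨W', hW'⟩ := by rw [hpvB, Function.update_self]
    set α' := F pv with hα'
    set β' := F pvB with hβ'
    have noflipAB : ¬ FlipPair u v wa wb := by
      rcases hcd with ⟨hc, hd⟩ | ⟨hc, hd⟩
      · subst hc; subst hd; exact fun hf => v.asymm _ _ hf.2 hvcd
      · subst hc; subst hd; exact fun hf => u.asymm _ _ hf.1 hucd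
    have noflipBA : ¬ FlipPair u v wb wa := by
      rcases hcd with ⟨hc, hd⟩ | ⟨hc, hd⟩
      · subst hc; subst hd; exact fun hf => u.asymm _ _ hf.1 hucd
      · subst hc; subst hd; exact fun hf => v.asymm _ _ hf.2 hvcd
    have flipA : α' ≠ wa → FlipPair u v wa α' := by
      intro hA
      constructor
      · have h1 := hSPf pu j ⟨v, hv'⟩ (by rw [hpv_pu, hIA]; exact Ne.symm hA)
        rw [hpv_pu, hpuj, hIA] at h1
        exact h1
      · have h2 := hSPf pv j ⟨u, hu'⟩ (by rw [hpu_pv, hIA]; exact hA)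
        rw [hpu_pv, hpvj, hIA] at h2
        exact h2
    have flipB : β' ≠ wb → FlipPair u v wb β' := by
      intro hB
      constructor
      · have h1 := hSPf puB j ⟨v, hv'⟩ (by rw [hpvB_puB, hIB]; exact Ne.symm hB)
        rw [hpvB_puB, hpuBj, hIB] at h1
        exact h1
      · have h2 := hSPf pvB j ⟨u, hu'⟩ (by rw [hpuB_pvB, hIB]; exact hB)
        rw [hpuB_pvB, hpvBj, hIB] at h2
        exact h2
    have flipI : α' ≠ β' → FlipPair W W' α' β' := by
      intro hAB
      constructor
      · have h1 := hSPf pv i ⟨W', hW'⟩ (by rw [hpvB_pv]; exact hAB)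
        rw [hpvB_pv, hpvi] at h1
        exact h1
      · have h2 := hSPf pvB i ⟨W, hW⟩ (by rw [hpv_pvB]; exact Ne.symm hAB)
        rw [hpv_pvB, hpvBi] at h2
        exact h2
    have hslice1 : ∀ t, t ≠ s → wa t = wb t := by
      intro t ht; rw [hoffa t ht, hoffb t ht]
    have hslice2 : ∀ t, t ≠ s → α' t = wa t := by
      intro t ht
      rw [hα', hF, fhat_ne D s fs i _ t ht, hoffa t ht]
      show Pref.top ((pv i).1) t = Pref.top W t
      rw [hpvi]
    have hslice3 : ∀ t, t ≠ s → β' t = wa t := by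
      intro t ht
      rw [hβ', hF, fhat_ne D s fs i _ t ht, hoffa t ht]
      show Pref.top ((pvB i).1) t = Pref.top W t
      rw [hpvBi, ← htopWW]
    by_cases hA : α' = wa
    · by_cases hB : β' = wb
      · exact ⟨hA, hB⟩
      · exfalso
        by_cases hAB : α' = β'
        · exact noflipBA (by rw [← hA, hAB]; exact flipB hB)
        · have := flip_unique hedge s hflip (flipI hAB) hslice1 hslice2 hslice3
          exact hB this.2
    · exfalso
      by_cases hAB : α' = β'
      · by_cases hBB : α' = wb
        · exact noflipAB (hBB ▸ flipA hA)
        · have hBn : β' ≠ wb := fun h => hBB (hAB.trans h)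
          have : wa = wb := flip_flip_left_eq hedgeuv (flipA hA) (hAB ▸ flipB hBn)
          exact hne' this
      · have := flip_unique hedge s hflip (flipI hAB) hslice1 hslice2 hslice3
        exact hA this.1
  -- the sweep over voters
  have sweep : ∀ js : List (Fin n), ∃ r' : Fin n → D,
      (∀ j, j ∈ js → j ≠ i → Pref.top ((r' j).1) = Pref.top W) ∧
      F (Function.update r' i ⟨W, hW⟩) = wa ∧
      F (Function.update r' i ⟨W', hW'⟩) = wb := by
    intro js
    induction js with
    | nil => exact ⟨r, fun j hj => (List.not_mem_nil hj).elim, rfl, rfl⟩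
    | cons j rest ih =>
      obtain ⟨r', hTop, hIA, hIB⟩ := ih
      by_cases hji : j = i
      · refine ⟨r', ?_, hIA, hIB⟩
        intro j' hj' hj'i
        rcases List.mem_cons.1 hj' with h | h
        · exact absurd (h.trans hji) hj'i
        · exact hTop j' h hj'i
      · by_cases hjtop : Pref.top ((r' j).1) = Pref.top W
        · refine ⟨r', ?_, hIA, hIB⟩
          intro j' hj' hj'i
          rcases List.mem_cons.1 hj' with h | h
          · rw [h]; exact hjtop
          · exact hTop j' h hj'i
        · -- move voter j along an exterior path
          have hRD : (r' j).1 ∈ D := (r' j).2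
          have hInvR : F (Function.update (Function.update r' j ⟨(r' j).1, hRD⟩) i ⟨W, hW⟩) = wa ∧
              F (Function.update (Function.update r' j ⟨(r' j).1, hRD⟩) i ⟨W', hW'⟩) = wb := by
            have hself : Function.update r' j ⟨(r' j).1, hRD⟩ = r' := by
              have : (⟨(r' j).1, hRD⟩ : D) = r' j := rfl
              rw [this, Function.update_eq_self]
            rw [hself]
            exact ⟨hIA, hIB⟩
          obtain ⟨T, hTD, hTtop, c, d, hcd, hRcd, hTcd⟩ :
              ∃ T, ∃ hTD : T ∈ D, Pref.top T = Pref.top W ∧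
                ∃ c d, ((c = wa ∧ d = wb) ∨ (c = wb ∧ d = wa)) ∧
                  (r' j).1.rel c d ∧ T.rel c d := by
            by_cases hor : (r' j).1.rel wa wb
            · exact ⟨W, hW, rfl, wa, wb, Or.inl ⟨rfl, rfl⟩, hor, hflip.1⟩
            · have hor' : (r' j).1.rel wb wa :=
                (r' j).1.rel_of_ne_of_not_rel hne' hor
              exact ⟨W', hW', htopWW.symm, wb, wa, Or.inr ⟨rfl, rfl⟩, hor', hflip.2⟩
          have htne : Pref.top (r' j).1 ≠ Pref.top T := by
            rw [hTtop]; exact hjtop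
          obtain ⟨l, hpath, hnr⟩ := (hExt (r' j).1 hRD T hTD htne).1 wa wb
          obtain ⟨hlen, hnd, hhead, hlast, hmemD, hchain⟩ := hpath
          have hnr' : ¬ HasRestoration l c d := by
            rcases hcd with ⟨hc, hd⟩ | ⟨hc, hd⟩
            · subst hc; subst hd; exact hnr
            · subst hc; subst hd; exact fun h => hnr (hasRestoration_swap h)
          have horient : ∀ z ∈ l, z.rel c d := orient_const hnr' hhead hlast hRcd hTcd
          have hInvT := path_induct AdjEdge (fun z => z ∈ D ∧ z.rel c d)
            (fun z => ∀ hz : z ∈ D,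
              F (Function.update (Function.update r' j ⟨z, hz⟩) i ⟨W, hW⟩) = wa ∧
              F (Function.update (Function.update r' j ⟨z, hz⟩) i ⟨W', hW'⟩) = wb)
            (fun u v hZu hZv he hInvu hv' =>
              step r' j hji c d hcd u v hZu.1 hv' he hZu.2 hZv.2 (hInvu hZu.1))
            l hchain (fun z hz => ⟨hmemD z hz, horient z hz⟩) (r' j).1 T hhead hlast
            (fun _ => hInvR)
          refine ⟨Function.update r' j ⟨T, hTD⟩, ?_, ?_, ?_⟩
          · intro j' hj' hj'i
            by_cases hjj : j' = j
            · subst hjj; rw [Function.update_self]; exact hTtop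
            · rw [Function.update_of_ne hjj]
              rcases List.mem_cons.1 hj' with h | h
              · exact absurd h hjj
              · exact hTop j' h hj'i
          · exact (hInvT hTD).1
          · exact (hInvT hTD).2
  obtain ⟨rstar, hTops, hA, hB⟩ := sweep (List.finRange n)
  have hfinal : F (Function.update rstar i ⟨W, hW⟩) s = Pref.top W s := by
    rw [hF, fhat_s]
    apply fs_top_outcome D s fs hu
    intro j
    by_cases hj : j = i
    · subst hj; rw [Function.update_self]
    · rw [Function.update_of_ne hj, hTops j (List.mem_finRange j) hj]
  rw [hA] at hfinal
  exact hτa.1 hfinal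

theorem stepB_move (hdec : DecomposableDomain D) (hn : 2 ≤ n)
    (hu : Unanimous (margDomain D s) fs) (hsp : StrategyProof (margDomain D s) fs)
    (i : Fin n)
    {u v : Pref (∀ t, A t)} (huD : u ∈ D) (hvD : v ∈ D)
    (hedge : AdjEdge u v) (htne : Pref.top u ≠ Pref.top v)
    (t : Fin m) (hts : t ≠ s)
    (hsim : ∀ t', t' ≠ t → Pref.top u t' = Pref.top v t')
    (p0 : Fin n → D) :
    fhat D s fs i (Function.update p0 i ⟨u, huD⟩) s =
      fhat D s fs i (Function.update p0 i ⟨v, hvD⟩) s := by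
  obtain ⟨hUf, hSPf⟩ := fhat_good D s fs hdec hn hu hsp i
  by_contra hxy
  set F := fhat D s fs i with hF
  set w1 := F (Function.update p0 i ⟨u, huD⟩) with hw1
  set w2 := F (Function.update p0 i ⟨v, hvD⟩) with hw2
  have hwne : w1 ≠ w2 := fun h => hxy (congrFun h s)
  have hflip : FlipPair u v w1 w2 := by
    constructor
    · have h1 := hSPf (Function.update p0 i ⟨u, huD⟩) i ⟨v, hvD⟩
        (by rw [Function.update_idem]; exact hwne)
      rw [Function.update_idem, Function.update_self] at h1
      exact h1
    · have h2 := hSPf (Function.update p0 i ⟨v, hvD⟩) i ⟨u, huD⟩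
        (by rw [Function.update_idem]; exact Ne.symm hwne)
      rw [Function.update_idem, Function.update_self] at h2
      exact h2
  have hmargne : w1 s ≠ Pref.top u s := by
    have e1 : w1 s = fs (Function.update (margProfile D s p0) i ⟨u.marg s, ⟨u, huD, rfl⟩⟩) := by
      rw [hw1, hF, fhat_s, margProfile_update]
    have e2 : w2 s = fs (Function.update
        (Function.update (margProfile D s p0) i ⟨u.marg s, ⟨u, huD, rfl⟩⟩) i
          ⟨v.marg s, ⟨v, hvD, rfl⟩⟩) := by
      rw [Function.update_idem, hw2, hF, fhat_s, margProfile_update]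
    have htopq : Pref.top (⟨v.marg s, ⟨v, hvD, rfl⟩⟩ : (margDomain D s)).1 =
        Pref.top (((Function.update (margProfile D s p0) i
          ⟨u.marg s, ⟨u, huD, rfl⟩⟩) i).1) := by
      rw [Function.update_self]
      show Pref.top (v.marg s) = Pref.top (u.marg s)
      rw [Pref.top_marg, Pref.top_marg]
      exact (hsim s (Ne.symm hts)).symm
    have hneq : fs (Function.update (margProfile D s p0) i ⟨u.marg s, ⟨u, huD, rfl⟩⟩) ≠
        fs (Function.update (Function.update (margProfile D s p0) i
          ⟨u.marg s, ⟨u, huD, rfl⟩⟩) i ⟨v.marg s, ⟨v, hvD, rfl⟩⟩) := by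
      rw [← e1, ← e2]; exact hxy
    have hmain := fs_flip D s fs hsp _ i _ htopq hneq
    have htopu : Pref.top (((Function.update (margProfile D s p0) i
        ⟨u.marg s, ⟨u, huD, rfl⟩⟩) i).1) = Pref.top u s := by
      rw [Function.update_self]
      show Pref.top (u.marg s) = Pref.top u s
      rw [Pref.top_marg]
    rw [htopu] at hmain
    rw [e1]
    exact hmain.1
  rcases top_flip hedge htne hflip with ⟨h1, h2⟩ | ⟨s₀, hsimtop, hsimw⟩
  · exact hmargne (by rw [h1])
  · have hs₀ : s₀ = t := by
      by_contra hcon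
      exact hsimtop.1 (hsim s₀ hcon)
    subst hs₀
    exact hxy (hsimw.2 s (Ne.symm hts))

end Core

/-- On a rich decomposable domain, every strategy-proof unanimous
marginal rule satisfies the tops-only property. -/
theorem stmt_13 {m : ℕ} (hm : 2 ≤ m) {A : Fin m → Type u}
    [∀ s, Fintype (A s)] [∀ s, Nonempty (A s)]
    (hcard : ∀ s, 2 ≤ Fintype.card (A s))
    (D : Set (Pref (∀ s, A s)))
    (hrich : RichDomain D)
    (hdec : DecomposableDomain D)
    (s : Fin m) (n : ℕ) (hn : 2 ≤ n)
    (fs : (Fin n → (margDomain D s)) → A s)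
    (hu : Unanimous (margDomain D s) fs) (hsp : StrategyProof (margDomain D s) fs) :
    TopsOnly (margDomain D s) fs := by
  classical
  obtain ⟨hMR, hDiv, hInt, hExt⟩ := hrich
  have SC : ∀ (q : Fin n → (margDomain D s)) (i : Fin n) (Q' : (margDomain D s)),
      Pref.top Q'.1 = Pref.top ((q i).1) → fs q = fs (Function.update q i Q') := by
    intro q i Q' htopQ
    have hlift : ∀ j : Fin n, ∃ P, P ∈ D ∧ Pref.marg P s = (q j).1 := by
      intro j
      obtain ⟨P, hP, hPm⟩ := (q j).2
      exact ⟨P, hP, hPm⟩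
    set p0 : Fin n → D := fun j => ⟨(hlift j).choose, (hlift j).choose_spec.1⟩ with hp0
    have hm0 : ∀ j, Pref.marg ((p0 j).1) s = (q j).1 := fun j => (hlift j).choose_spec.2
    have hq0 : margProfile D s p0 = q := by
      funext j
      exact Subtype.ext (hm0 j)
    obtain ⟨P', hP', hP'm⟩ := Q'.2
    -- Step A: the outcome depends only on the (full) top of voter i's preference
    have stepA : ∀ (V : Pref (∀ t, A t)) (hV : V ∈ D) (V₂ : Pref (∀ t, A t)) (hV₂ : V₂ ∈ D),
        Pref.top V = Pref.top V₂ →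
        fhat D s fs i (Function.update p0 i ⟨V, hV⟩) =
          fhat D s fs i (Function.update p0 i ⟨V₂, hV₂⟩) := by
      intro V hV V₂ hV₂ htopV
      by_cases hVe : V = V₂
      · subst hVe; rfl
      · obtain ⟨l, hpath, htoppath⟩ := hInt V hV V₂ hV₂ hVe htopV
        obtain ⟨hlen, hnd, hhead, hlast, hmemD, hchain⟩ := hpath
        have key := path_induct AdjEdge (fun z => z ∈ D ∧ Pref.top z = Pref.top V)
          (fun z => ∀ hz : z ∈ D,
            fhat D s fs i (Function.update p0 i ⟨z, hz⟩) =
              fhat D s fs i (Function.update p0 i ⟨V, hV⟩))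
          (fun u v hZu hZv he hInvu => by
            intro hv'
            have hcc := core_const D s fs hdec hn hu hsp hExt i hZu.1 hv'
              he (hZu.2.trans hZv.2.symm) p0
            rw [← hcc]
            exact hInvu hZu.1)
          l hchain (fun z hz => ⟨hmemD z hz, htoppath z hz⟩) V V₂ hhead hlast
          (fun _ => rfl)
        exact (key hV₂).symm
    -- choice of a canonical lift for each top
    have stepAv : ∀ (V : Pref (∀ t, A t)) (hV : V ∈ D),
        fhat D s fs i (Function.update p0 i ⟨V, hV⟩) s =
          fhat D s fs i (Function.update p0 i
            ⟨(hMR (Pref.top V)).choose, (hMR (Pref.top V)).choose_spec.1⟩) s := by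
      intro V hV
      rw [stepA V hV (hMR (Pref.top V)).choose (hMR (Pref.top V)).choose_spec.1
        ((hMR (Pref.top V)).choose_spec.2).symm]
    set vfun : (∀ t, A t) → A s := fun θ =>
      fhat D s fs i (Function.update p0 i
        ⟨(hMR θ).choose, (hMR θ).choose_spec.1⟩) s with hvfun
    have stepAv' : ∀ (V : Pref (∀ t, A t)) (hV : V ∈ D),
        fhat D s fs i (Function.update p0 i ⟨V, hV⟩) s = vfun (Pref.top V) :=
      fun V hV => stepAv V hV
    -- Step B: moving the top across one non-s coordinate
    have stepB : ∀ (θ₁ θ₂ : ∀ t, A t) (t : Fin m), t ≠ s → SimilarAt θ₁ θ₂ t →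
        vfun θ₁ = vfun θ₂ := by
      intro θ₁ θ₂ t hts hsim
      have hR1D : (hMR θ₁).choose ∈ D := (hMR θ₁).choose_spec.1
      have hR2D : (hMR θ₂).choose ∈ D := (hMR θ₂).choose_spec.1
      have hR1t : Pref.top (hMR θ₁).choose = θ₁ := (hMR θ₁).choose_spec.2
      have hR2t : Pref.top (hMR θ₂).choose = θ₂ := (hMR θ₂).choose_spec.2
      have htne : Pref.top (hMR θ₁).choose ≠ Pref.top (hMR θ₂).choose := by
        rw [hR1t, hR2t]
        intro hcon
        exact hsim.1 (congrFun hcon t)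
      have hsimR : SimilarAt (Pref.top (hMR θ₁).choose) (Pref.top (hMR θ₂).choose) t := by
        rw [hR1t, hR2t]; exact hsim
      obtain ⟨l, hpath, hQt⟩ := (hExt (hMR θ₁).choose hR1D (hMR θ₂).choose hR2D htne).2 t hsimR
      obtain ⟨hlen, hnd, hhead, hlast, hmemD, hchain⟩ := hpath
      have key := path_induct AdjEdge
        (fun z => z ∈ D ∧ (∀ t', t' ≠ t → Pref.top z t' = Pref.top ((hMR θ₁).choose) t'))
        (fun z => ∀ hz : z ∈ D,
          fhat D s fs i (Function.update p0 i ⟨z, hz⟩) s = vfun θ₁)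
        (fun u v hZu hZv he hInvu => by
          intro hv'
          by_cases htuv : Pref.top u = Pref.top v
          · have hcc := core_const D s fs hdec hn hu hsp hExt i hZu.1 hv' he htuv p0
            rw [← congrFun hcc s]
            exact hInvu hZu.1
          · have hsim' : ∀ t', t' ≠ t → Pref.top u t' = Pref.top v t' := by
              intro t' ht'
              rw [hZu.2 t' ht', hZv.2 t' ht']
            have hmv := stepB_move D s fs hdec hn hu hsp i hZu.1 hv' he htuv t hts hsim' p0
            rw [← hmv]
            exact hInvu hZu.1)
        l hchain (fun z hz => ⟨hmemD z hz, fun t' ht' => hQt z hz t' ht'⟩)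
        (hMR θ₁).choose (hMR θ₂).choose hhead hlast
        (fun hz => stepAv' _ hz ▸ (by rw [hR1t]))
      have h2 := key hR2D
      rw [stepAv' _ hR2D, hR2t] at h2
      exact h2.symm
    -- bridge across arbitrarily many non-s coordinates
    have bridge : ∀ (k : ℕ) (θ₁ θ₂ : ∀ t, A t),
        (Finset.univ.filter (fun t => θ₁ t ≠ θ₂ t)).card ≤ k →
        θ₁ s = θ₂ s → vfun θ₁ = vfun θ₂ := by
      intro k
      induction k with
      | zero =>
        intro θ₁ θ₂ hcard hs
        have hθ : θ₁ = θ₂ := by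
          funext t
          by_contra hcon
          have htm : t ∈ Finset.univ.filter (fun t => θ₁ t ≠ θ₂ t) := by simp [hcon]
          have := Finset.card_pos.2 ⟨t, htm⟩
          omega
        rw [hθ]
      | succ k ih =>
        intro θ₁ θ₂ hcard hs
        by_cases hdone : θ₁ = θ₂
        · rw [hdone]
        · have hex : ∃ t, θ₁ t ≠ θ₂ t := by
            by_contra hcon
            push_neg at hcon
            exact hdone (funext hcon)
          obtain ⟨t, ht⟩ := hex
          have hts : t ≠ s := by
            intro hc; subst hc; exact ht hs
          have hsim : SimilarAt θ₁ (Function.update θ₁ t (θ₂ t)) t := by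
            constructor
            · rw [Function.update_self]; exact ht
            · intro t' ht'; rw [Function.update_of_ne ht']
          have h1 : vfun θ₁ = vfun (Function.update θ₁ t (θ₂ t)) :=
            stepB θ₁ (Function.update θ₁ t (θ₂ t)) t hts hsim
          have hsub : (Finset.univ.filter (fun t' => Function.update θ₁ t (θ₂ t) t' ≠ θ₂ t')) ⊆
              (Finset.univ.filter (fun t' => θ₁ t' ≠ θ₂ t')).erase t := by
            intro t' ht'
            simp only [Finset.mem_filter, Finset.mem_univ, true_and] at ht'
            have htt : t' ≠ t := by
              intro hc; subst hc
              exact ht' (by rw [Function.update_self])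
            rw [Finset.mem_erase]
            refine ⟨htt, ?_⟩
            simp only [Finset.mem_filter, Finset.mem_univ, true_and]
            rw [Function.update_of_ne htt] at ht'
            exact ht'
          have htmem : t ∈ Finset.univ.filter (fun t' => θ₁ t' ≠ θ₂ t') := by simp [ht]
          have hpos := Finset.card_pos.2 ⟨t, htmem⟩
          have h1c := Finset.card_le_card hsub
          have h2c := Finset.card_erase_of_mem htmem
          have hcard' : (Finset.univ.filter
              (fun t' => Function.update θ₁ t (θ₂ t) t' ≠ θ₂ t')).card ≤ k := by omega
          have hs'' : Function.update θ₁ t (θ₂ t) s = θ₂ s := by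
            rw [Function.update_of_ne (Ne.symm hts)]; exact hs
          rw [h1]
          exact ih (Function.update θ₁ t (θ₂ t)) θ₂ hcard' hs''
    -- endpoints
    have hQ'eq : (⟨Pref.marg P' s, ⟨P', hP', rfl⟩⟩ : (margDomain D s)) = Q' :=
      Subtype.ext hP'm
    have e1 : fs q = fhat D s fs i (Function.update p0 i (p0 i)) s := by
      rw [Function.update_eq_self, fhat_s, hq0]
    have e2 : fs (Function.update q i Q') =
        fhat D s fs i (Function.update p0 i ⟨P', hP'⟩) s := by
      rw [fhat_s, margProfile_update, hq0, hQ'eq]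
    have e1' : fhat D s fs i (Function.update p0 i (p0 i)) s = vfun (Pref.top ((p0 i).1)) :=
      stepAv' ((p0 i).1) ((p0 i).2)
    have e2' : fhat D s fs i (Function.update p0 i ⟨P', hP'⟩) s = vfun (Pref.top P') :=
      stepAv' P' hP'
    have t1 : Pref.top ((p0 i).1) s = Pref.top ((q i).1) := by
      rw [← hm0 i]
      exact (Pref.top_marg _ s).symm
    have t2 : Pref.top P' s = Pref.top Q'.1 := by
      rw [← hP'm]
      exact (Pref.top_marg _ s).symm
    have htopPi : Pref.top ((p0 i).1) s = Pref.top P' s := by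
      rw [t1, t2, htopQ]
    have hbr := bridge (Finset.univ.filter
        (fun t => Pref.top ((p0 i).1) t ≠ Pref.top P' t)).card
      (Pref.top ((p0 i).1)) (Pref.top P') le_rfl htopPi
    rw [e1, e1', e2, e2']
    exact hbr
  -- conclude tops-onlyness by changing one voter at a time
  intro p p' htops
  have seq : ∀ k : ℕ, k ≤ n → fs p = fs (fun j => if j.val < k then p' j else p j) := by
    intro k
    induction k with
    | zero =>
      intro _
      have : (fun j : Fin n => if j.val < 0 then p' j else p j) = p := by
        funext j; simp
      rw [this]
    | succ k ih =>
      intro hk1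
      have hkn : k < n := hk1
      have hmid := ih (Nat.le_of_succ_le hk1)
      have hupdate : (fun j : Fin n => if j.val < k + 1 then p' j else p j) =
          Function.update (fun j : Fin n => if j.val < k then p' j else p j)
            ⟨k, hkn⟩ (p' ⟨k, hkn⟩) := by
        funext j
        by_cases hj : j = (⟨k, hkn⟩ : Fin n)
        · subst hj
          rw [Function.update_self, if_pos (Nat.lt_succ_self k)]
        · rw [Function.update_of_ne hj]
          by_cases hjk : j.val < k
          · rw [if_pos hjk, if_pos (Nat.lt_succ_of_lt hjk)]
          · have hnk : ¬ j.val < k + 1 := by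
              intro hc
              exact hj (Fin.ext (show j.val = k by omega))
            rw [if_neg hjk, if_neg hnk]
      rw [hmid, hupdate]
      apply SC
      have hcond : ¬ ((⟨k, hkn⟩ : Fin n) : ℕ) < k := by simp
      show Pref.top (p' ⟨k, hkn⟩).1 =
        Pref.top ((if ((⟨k, hkn⟩ : Fin n) : ℕ) < k then p' ⟨k, hkn⟩ else p ⟨k, hkn⟩)).1
      rw [if_neg hcond]
      exact (htops ⟨k, hkn⟩).symm
  have hfin := seq n le_rfl
  have hall : (fun j : Fin n => if j.val < n then p' j else p j) = p' := by
    funext j; rw [if_pos j.isLt]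
  rw [← hall]
  exact hfin
end
end

section
/- Let D be a rich domain that is a decomposable domain. Fix a linear order ≺^s on each A^s (with ≺ = ∏_s ≺^s) and, for each s ∈ M, marginal thresholds x̲^s, x̄^s ∈ A^s such that every induced marginal preference of [D]^s is hybrid on ≺^s with respect to x̲^s and x̄^s. Then every preference of D is multidimensional hybrid on ≺ with respect to the thresholds x̲ = (x̲^1,…,x̲^m) and x̄ = (x̄^1,…,x̄^m). -/
noncomputable section

universe u

section Stmt15Aux

variable {β : Type u}

theorem Pref.top_unique_s15 [Finite β] [Nonempty β] (P : Pref β) (a : β)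
    (h : ∀ b, b ≠ a → P.rel a b) : P.top = a := by
  by_contra hne
  have h1 := h P.top hne
  have h2 := P.top_spec a (fun h' => hne h'.symm)
  exact P.asymm _ _ h1 h2

theorem Pref.top_marg_s15 {m : ℕ} {A : Fin m → Type u} [∀ s, Fintype (A s)]
    [∀ s, Nonempty (A s)] (P : Pref (∀ s, A s)) (s : Fin m) :
    (P.marg s).top = P.top s := by
  apply Pref.top_unique_s15
  intro y hy
  show P.rel (Function.update P.top s (P.top s)) (Function.update P.top s y)
  rw [Function.update_eq_self]
  apply P.top_spec
  intro h
  apply hy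
  have := congrFun h s
  simpa using this

/-- The two-voter median formula with phantoms `b1`, `b2`. -/
def Fmed [lin : LinearOrder β] (b1 b2 t1 t2 : β) : β :=
  max (min b1 t1) (max (min b2 t2) (min t1 t2))

variable [lin : LinearOrder β]

theorem Fmed_self (b1 b2 v : β) : Fmed b1 b2 v v = v := by
  rw [Fmed, min_self, max_eq_right (min_le_right _ _), max_eq_right (min_le_right _ _)]

theorem Fmed_comm (b1 b2 t1 t2 : β) : Fmed b1 b2 t1 t2 = Fmed b2 b1 t2 t1 := by
  rw [Fmed, Fmed, min_comm t2 t1, max_left_comm]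

theorem Fmed_eq (b1 b2 t1 t2 : β) :
    Fmed b1 b2 t1 t2 = max (min b1 t1) (min t2 (max b2 t1)) := by
  rw [Fmed]
  congr 1
  rw [min_comm b2 t2, min_comm t1 t2, ← min_max_distrib_left]

theorem Fmed_dict0 {B b t1 : β} (h1 : t1 ≤ B) (h2 : b ≤ t1) (t2 : β) :
    Fmed B b t1 t2 = t1 := by
  rw [Fmed, min_eq_right h1]
  apply max_eq_left
  apply max_le
  · exact le_trans (min_le_left _ _) h2
  · exact min_le_left _ _

theorem Fmed_dict1 {B b t2 : β} (h1 : t2 ≤ B) (h2 : b ≤ t2) (t1 : β) :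
    Fmed b B t1 t2 = t2 := by
  rw [Fmed, min_eq_right h1, max_eq_left (min_le_right t1 t2)]
  apply max_eq_right
  exact le_trans (min_le_left _ _) h2

theorem Fmed_case1 {c t1 t2 : β} (h1 : t2 < c) (h2 : c < t1) (b2 : β) :
    Fmed c b2 t1 t2 = c := by
  rw [Fmed, min_eq_left h2.le, min_eq_right (h1.le.trans h2.le),
    max_eq_right (min_le_right _ _)]
  exact max_eq_left h1.le

theorem Fmed_case2 {c t1 t2 : β} (h1 : t1 < c) (h2 : c < t2) (b1 : β) :
    Fmed b1 c t1 t2 = c := by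
  rw [Fmed, min_eq_left h2.le, min_eq_left (h1.le.trans h2.le), max_eq_left h1.le]
  exact max_eq_right ((min_le_right _ _).trans h1.le)

theorem extreme_not_mem {xlo xhi y : β}
    (h : (∀ z, y ≤ z) ∨ (∀ z, z ≤ y)) : y ∉ sInterval lin xlo xhi := by
  intro hmem
  simp only [sInterval, Set.mem_setOf_eq] at hmem
  rcases hmem with ⟨h1, h2⟩ | ⟨h1, h2⟩ <;> rcases h with h | h
  · exact absurd (show xlo < y from h1) (not_lt.2 (h xlo))
  · exact absurd (show y < xhi from h2) (not_lt.2 (h xhi))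
  · exact absurd (show xhi < y from h1) (not_lt.2 (h xhi))
  · exact absurd (show y < xlo from h2) (not_lt.2 (h xlo))

theorem mem_sInterval_bounds {xlo xhi z : β}
    (h : z ∈ sInterval lin xlo xhi) : min xlo xhi < z ∧ z < max xlo xhi := by
  simp only [sInterval, Set.mem_setOf_eq] at h
  rcases h with ⟨h1, h2⟩ | ⟨h1, h2⟩
  · exact ⟨(min_le_left _ _).trans_lt h1, (show z < xhi from h2).trans_le (le_max_right _ _)⟩
  · exact ⟨(min_le_right _ _).trans_lt h1, (show z < xlo from h2).trans_le (le_max_left _ _)⟩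

theorem not_mem_sInterval_side {xlo xhi c : β} (h : c ∉ sInterval lin xlo xhi) :
    c ≤ min xlo xhi ∨ max xlo xhi ≤ c := by
  by_contra hc
  push_neg at hc
  apply h
  simp only [sInterval, Set.mem_setOf_eq]
  rcases le_total xlo xhi with hle | hle
  · rw [min_eq_left hle, max_eq_right hle] at hc
    exact Or.inl hc
  · rw [min_eq_right hle, max_eq_left hle] at hc
    exact Or.inr hc

theorem sp_core [Finite β] [Nonempty β] {xlo xhi : β}
    {Q : Pref β} (hQ : HybridPref lin xlo xhi Q) {L U : β} (hLU : L ≤ U)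
    (hL : Q.top < L → L < U → L ∉ sInterval lin xlo xhi)
    (hU : U < Q.top → L < U → U ∉ sInterval lin xlo xhi)
    {o' : β} (h1 : L ≤ o') (h2 : o' ≤ U)
    (hne : max L (min Q.top U) ≠ o') :
    Q.rel (max L (min Q.top U)) o' := by
  rcases lt_or_ge Q.top L with h | h
  · rw [min_eq_left (h.le.trans hLU), max_eq_left h.le] at hne ⊢
    have hlt : L < o' := lt_of_le_of_ne h1 hne
    refine hQ L o' hne (Or.inl ⟨h, hlt⟩) (hL h (hlt.trans_le h2))
  · rcases le_or_gt Q.top U with h' | h'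
    · rw [min_eq_left h', max_eq_right h] at hne ⊢
      exact Q.top_spec o' (Ne.symm hne)
    · rw [min_eq_right h'.le, max_eq_right hLU] at hne ⊢
      have hlt : o' < U := lt_of_le_of_ne h2 (Ne.symm hne)
      refine hQ U o' hne (Or.inr ⟨hlt, h'⟩) (hU h' (h1.trans_lt hlt))

theorem fmed_sp_right [Finite β] [Nonempty β] {xlo xhi b1 b2 : β}
    (hb1 : b1 ∉ sInterval lin xlo xhi) (hb2 : b2 ∉ sInterval lin xlo xhi)
    (hstrad : ∀ z ∈ sInterval lin xlo xhi, (b1 ≤ z ∨ b2 ≤ z) ∧ (z ≤ b1 ∨ z ≤ b2))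
    {Q : Pref β} (hQ : HybridPref lin xlo xhi Q) (t1 t2' : β)
    (hne : Fmed b1 b2 t1 Q.top ≠ Fmed b1 b2 t1 t2') :
    Q.rel (Fmed b1 b2 t1 Q.top) (Fmed b1 b2 t1 t2') := by
  rw [Fmed_eq b1 b2 t1 Q.top, Fmed_eq b1 b2 t1 t2'] at hne ⊢
  set L := min b1 t1 with hLdef
  set U := max b2 t1 with hUdef
  have hLU : L ≤ U := (min_le_right _ _).trans (le_max_right _ _)
  have hsafeL : Q.top < L → L < U → L ∉ sInterval lin xlo xhi := by
    intro _ hLltU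
    rcases min_cases b1 t1 with ⟨hLe, _⟩ | ⟨hLe, hlt⟩
    · rw [hLdef, hLe]; exact hb1
    · rw [hLdef, hLe]
      rw [hLdef, hLe] at hLltU
      have ht1b2 : t1 < b2 := by
        rcases lt_max_iff.mp hLltU with h | h
        · exact h
        · exact absurd h (lt_irrefl _)
      intro hmem
      rcases (hstrad t1 hmem).1 with h | h
      · exact absurd h (not_le.2 hlt)
      · exact absurd h (not_le.2 ht1b2)
  have hsafeU : U < Q.top → L < U → U ∉ sInterval lin xlo xhi := by
    intro _ hLltU
    rcases max_cases b2 t1 with ⟨hUe, _⟩ | ⟨hUe, hlt⟩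
    · rw [hUdef, hUe]; exact hb2
    · rw [hUdef, hUe]
      rw [hUdef, hUe] at hLltU
      have ht1b1 : b1 < t1 := by
        rcases min_lt_iff.mp hLltU with h | h
        · exact h
        · exact absurd h (lt_irrefl _)
      intro hmem
      rcases (hstrad t1 hmem).2 with h | h
      · exact absurd h (not_le.2 ht1b1)
      · exact absurd h (not_le.2 hlt)
  exact sp_core hQ hLU hsafeL hsafeU (le_max_left _ _)
    (max_le hLU (min_le_right _ _)) hne

end Stmt15Aux

section Stmt15Engine

variable {m : ℕ} {A : Fin m → Type u} [∀ s, Fintype (A s)] [∀ s, Nonempty (A s)]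

theorem stmt15_engine (D : Set (Pref (∀ s, A s))) (hdec : DecomposableDomain D)
    (prec : ∀ s, LinearOrder (A s)) (xlo xhi : ∀ s, A s)
    (hhyb : ∀ s, ∀ Q ∈ margDomain D s, HybridPref (prec s) (xlo s) (xhi s) Q)
    (b1 b2 : ∀ s, A s)
    (hb1 : ∀ s, b1 s ∉ sInterval (prec s) (xlo s) (xhi s))
    (hb2 : ∀ s, b2 s ∉ sInterval (prec s) (xlo s) (xhi s))
    (hstrad : ∀ s, ∀ z ∈ sInterval (prec s) (xlo s) (xhi s),
      ((prec s).le (b1 s) z ∨ (prec s).le (b2 s) z) ∧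
      ((prec s).le z (b1 s) ∨ (prec s).le z (b2 s)))
    (P0 P P2 : Pref (∀ s, A s)) (h0 : P0 ∈ D) (hP : P ∈ D) (h2 : P2 ∈ D)
    (o o' : ∀ s, A s)
    (ho : ∀ s, o s = @Fmed _ (prec s) (b1 s) (b2 s) (Pref.top P0 s) (Pref.top P s))
    (ho' : ∀ s, o' s = @Fmed _ (prec s) (b1 s) (b2 s) (Pref.top P0 s) (Pref.top P2 s))
    (hne : o ≠ o') : P.rel o o' := by
  classical
  set g : ∀ s : Fin m, (Fin 2 → margDomain D s) → A s :=
    fun s q => @Fmed _ (prec s) (b1 s) (b2 s) (Pref.top (q 0).1) (Pref.top (q 1).1)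
    with hg
  set f : (Fin 2 → D) → (∀ s, A s) := fun p s => g s (margProfile D s p) with hf
  have hgood : ∀ s, Unanimous (margDomain D s) (g s) ∧
      StrategyProof (margDomain D s) (g s) := by
    intro s
    letI := prec s
    constructor
    · intro q v hv
      show Fmed (b1 s) (b2 s) (Pref.top (q 0).1) (Pref.top (q 1).1) = v
      rw [hv 0, hv 1]
      exact Fmed_self _ _ _
    · intro q i Q' hneq
      have hi : i = 0 ∨ i = 1 := by
        rcases i with ⟨iv, hiv⟩
        match iv, hiv with
        | 0, _ => exact Or.inl rfl
        | 1, _ => exact Or.inr rfl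
      have hstrad' : ∀ z ∈ sInterval (prec s) (xlo s) (xhi s),
          (b1 s ≤ z ∨ b2 s ≤ z) ∧ (z ≤ b1 s ∨ z ≤ b2 s) := hstrad s
      rcases hi with rfl | rfl
      · -- voter 0 deviates
        have e0 : Function.update q 0 Q' 0 = Q' := Function.update_self _ _ _
        have e1 : Function.update q 0 Q' 1 = q 1 :=
          Function.update_of_ne (by decide) _ _
        show (q 0).1.rel (g s q) (g s (Function.update q 0 Q'))
        have hrw : ∀ q' : Fin 2 → margDomain D s,
            g s q' = Fmed (b2 s) (b1 s) (Pref.top (q' 1).1) (Pref.top (q' 0).1) :=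
          fun q' => Fmed_comm _ _ _ _
        rw [hrw, hrw, e0, e1]
        rw [hg] at hneq
        simp only at hneq
        rw [Fmed_comm (b1 s) (b2 s), Fmed_comm (b1 s) (b2 s), e0, e1] at hneq
        exact fmed_sp_right (hb2 s) (hb1 s)
          (fun z hz => ⟨(hstrad' z hz).1.symm, (hstrad' z hz).2.symm⟩)
          (hhyb s _ (q 0).2) _ _ hneq
      · -- voter 1 deviates
        have e0 : Function.update q 1 Q' 0 = q 0 :=
          Function.update_of_ne (by decide) _ _
        have e1 : Function.update q 1 Q' 1 = Q' := Function.update_self _ _ _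
        show (q 1).1.rel (g s q) (g s (Function.update q 1 Q'))
        rw [hg]
        simp only
        rw [e0, e1]
        rw [hg] at hneq
        simp only at hneq
        rw [e0, e1] at hneq
        exact fmed_sp_right (hb1 s) (hb2 s) hstrad' (hhyb s _ (q 1).2) _ _ hneq
  have hUS : Unanimous D f ∧ StrategyProof D f :=
    (hdec 2 le_rfl f).mpr ⟨g, fun p s => rfl, hgood⟩
  set p : Fin 2 → D := ![⟨P0, h0⟩, ⟨P, hP⟩] with hp
  have hfp : f p = o := by
    funext s
    show @Fmed _ (prec s) (b1 s) (b2 s) (Pref.top ((p 0).1.marg s))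
      (Pref.top ((p 1).1.marg s)) = o s
    rw [Pref.top_marg_s15, Pref.top_marg_s15, ho s]
    rfl
  have hfp' : f (Function.update p 1 ⟨P2, h2⟩) = o' := by
    funext s
    have e0 : Function.update p 1 ⟨P2, h2⟩ 0 = ⟨P0, h0⟩ := by
      rw [Function.update_of_ne (by decide)]
      rfl
    have e1 : Function.update p 1 ⟨P2, h2⟩ 1 = ⟨P2, h2⟩ := Function.update_self _ _ _
    show @Fmed _ (prec s) (b1 s) (b2 s)
      (Pref.top ((Function.update p 1 ⟨P2, h2⟩ 0).1.marg s))
      (Pref.top ((Function.update p 1 ⟨P2, h2⟩ 1).1.marg s)) = o' s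
    rw [e0, e1, Pref.top_marg_s15, Pref.top_marg_s15, ho' s]
  have hres := hUS.2 p 1 ⟨P2, h2⟩ (by rw [hfp, hfp']; exact hne)
  rw [hfp, hfp'] at hres
  exact hres

theorem stmt15_engine' (D : Set (Pref (∀ s, A s))) (hdec : DecomposableDomain D)
    (hmr : MinimallyRich D)
    (prec : ∀ s, LinearOrder (A s)) (xlo xhi : ∀ s, A s)
    (hhyb : ∀ s, ∀ Q ∈ margDomain D s, HybridPref (prec s) (xlo s) (xhi s) Q)
    (b1 b2 : ∀ s, A s)
    (hb1 : ∀ s, b1 s ∉ sInterval (prec s) (xlo s) (xhi s))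
    (hb2 : ∀ s, b2 s ∉ sInterval (prec s) (xlo s) (xhi s))
    (hstrad : ∀ s, ∀ z ∈ sInterval (prec s) (xlo s) (xhi s),
      ((prec s).le (b1 s) z ∨ (prec s).le (b2 s) z) ∧
      ((prec s).le z (b1 s) ∨ (prec s).le z (b2 s)))
    (P : Pref (∀ s, A s)) (hP : P ∈ D) (a b : ∀ s, A s) (hne : a ≠ b)
    (ho : ∀ s, a s = @Fmed _ (prec s) (b1 s) (b2 s) (b s) (Pref.top P s)) :
    P.rel a b := by
  obtain ⟨P0, h0, htop0⟩ := hmr b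
  refine stmt15_engine D hdec prec xlo xhi hhyb b1 b2 hb1 hb2 hstrad
    P0 P P0 h0 hP h0 a b ?_ ?_ hne
  · intro s; rw [htop0]; exact ho s
  · intro s; rw [htop0]
    letI := prec s
    exact (Fmed_self _ _ _).symm

end Stmt15Engine

/-- On a rich decomposable domain, if all induced marginal preferences
are hybrid w.r.t. the marginal thresholds, then every preference of the domain is
multidimensional hybrid w.r.t. the assembled thresholds. -/
theorem stmt_15 {m : ℕ} (hm : 2 ≤ m) {A : Fin m → Type u}
    [∀ s, Fintype (A s)] [∀ s, Nonempty (A s)]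
    (hcard : ∀ s, 2 ≤ Fintype.card (A s))
    (D : Set (Pref (∀ s, A s)))
    (hrich : RichDomain D)
    (hdec : DecomposableDomain D)
    (prec : ∀ s, LinearOrder (A s)) (xlo xhi : ∀ s, A s)
    (hth : Thresholds prec xlo xhi)
    (hhyb : ∀ s, ∀ Q ∈ margDomain D s, HybridPref (prec s) (xlo s) (xhi s) Q) :
    ∀ P ∈ D, MDHybrid prec xlo xhi P := by
  classical
  intro P hP s a b hsim
  have hmr : MinimallyRich D := hrich.1
  have hne : a ≠ b := fun h => hsim.1 (congrFun h s)
  set bmin : ∀ s', A s' :=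
    fun s' => @Finset.min' _ (prec s') Finset.univ Finset.univ_nonempty with hbmin
  set bmax : ∀ s', A s' :=
    fun s' => @Finset.max' _ (prec s') Finset.univ Finset.univ_nonempty with hbmax
  have hminle : ∀ s' (z : A s'), (prec s').le (bmin s') z := fun s' z =>
    @Finset.min'_le _ (prec s') _ z (Finset.mem_univ z)
  have hmaxle : ∀ s' (z : A s'), (prec s').le z (bmax s') := fun s' z =>
    @Finset.le_max' _ (prec s') _ z (Finset.mem_univ z)
  have hminnot : ∀ s', bmin s' ∉ sInterval (prec s') (xlo s') (xhi s') := fun s' =>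
    @extreme_not_mem _ (prec s') _ _ _ (Or.inl (hminle s'))
  have hmaxnot : ∀ s', bmax s' ∉ sInterval (prec s') (xlo s') (xhi s') := fun s' =>
    @extreme_not_mem _ (prec s') _ _ _ (Or.inr (hmaxle s'))
  have key : ∀ β1s β2s : A s,
      β1s ∉ sInterval (prec s) (xlo s) (xhi s) →
      β2s ∉ sInterval (prec s) (xlo s) (xhi s) →
      (∀ z ∈ sInterval (prec s) (xlo s) (xhi s),
        ((prec s).le β1s z ∨ (prec s).le β2s z) ∧
        ((prec s).le z β1s ∨ (prec s).le z β2s)) →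
      a s = @Fmed _ (prec s) β1s β2s (b s) (Pref.top P s) →
      P.rel a b := by
    intro β1s β2s hq1 hq2 hq3 hq4
    refine stmt15_engine' D hdec hmr prec xlo xhi hhyb
      (Function.update bmax s β1s) (Function.update bmin s β2s) ?_ ?_ ?_ P hP a b hne ?_
    · intro s'
      by_cases h : s' = s
      · subst h; rw [Function.update_self]; exact hq1
      · rw [Function.update_of_ne h]; exact hmaxnot s'
    · intro s'
      by_cases h : s' = s
      · subst h; rw [Function.update_self]; exact hq2
      · rw [Function.update_of_ne h]; exact hminnot s'
    · intro s' z hz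
      by_cases h : s' = s
      · subst h
        rw [Function.update_self, Function.update_self]
        exact hq3 z hz
      · rw [Function.update_of_ne h, Function.update_of_ne h]
        exact ⟨Or.inr (hminle s' z), Or.inl (hmaxle s' z)⟩
    · intro s'
      by_cases h : s' = s
      · subst h
        rw [Function.update_self, Function.update_self]
        exact hq4
      · letI := prec s'
        rw [Function.update_of_ne h, Function.update_of_ne h, hsim.2 s' h]
        exact (Fmed_dict0 (hmaxle s' (b s')) (hminle s' (b s')) _).symm
  constructor
  · -- part (i)
    intro ha
    refine key (bmin s) (bmax s) (hminnot s) (hmaxnot s)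
      (fun z hz => ⟨Or.inl (hminle s z), Or.inr (hmaxle s z)⟩) ?_
    letI := prec s
    rw [ha]
    exact (Fmed_dict1 (hmaxle s _) (hminle s _) _).symm
  · -- part (ii)
    intro hmem hnot
    have hside : (∀ z ∈ sInterval (prec s) (xlo s) (xhi s), (prec s).le (a s) z) ∨
        (∀ z ∈ sInterval (prec s) (xlo s) (xhi s), (prec s).le z (a s)) := by
      letI := prec s
      rcases not_mem_sInterval_side hnot with h | h
      · exact Or.inl fun z hz => h.trans (mem_sInterval_bounds hz).1.le
      · exact Or.inr fun z hz => (mem_sInterval_bounds hz).2.le.trans h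
    simp only [sInterval, Set.mem_setOf_eq] at hmem
    rcases hmem with ⟨h1, h2⟩ | ⟨h1, h2⟩
    · -- P.top s < a s < b s
      rcases hside with hlow | hhigh
      · refine key (a s) (bmax s) hnot (hmaxnot s)
          (fun z hz => ⟨Or.inl (hlow z hz), Or.inr (hmaxle s z)⟩) ?_
        letI := prec s
        exact (Fmed_case1 h1 h2 _).symm
      · refine key (a s) (bmin s) hnot (hminnot s)
          (fun z hz => ⟨Or.inr (hminle s z), Or.inl (hhigh z hz)⟩) ?_
        letI := prec s
        exact (Fmed_case1 h1 h2 _).symm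
    · -- b s < a s < P.top s
      rcases hside with hlow | hhigh
      · refine key (bmax s) (a s) (hmaxnot s) hnot
          (fun z hz => ⟨Or.inr (hlow z hz), Or.inl (hmaxle s z)⟩) ?_
        letI := prec s
        exact (Fmed_case2 h1 h2 _).symm
      · refine key (bmin s) (a s) (hminnot s) hnot
          (fun z hz => ⟨Or.inl (hminle s z), Or.inr (hhigh z hz)⟩) ?_
        letI := prec s
        exact (Fmed_case2 h1 h2 _).symm
end
end
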